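/- arXiv:2507.07022 — 6 statements merged into one kernel-verified Lean document; each statement's English description precedes it below -/
import Mathlib

section
/- The squarefree principal t-spread Borel ideal B_t(u) admits the minimal primary decomposition B_t(u) = ( intersection over G in the family 𝒢 of P_{[n]∖G} ) ∩ ( intersection over v in G(B_t(u)) of P_{[n]∖supp_t(v)} ); in particular, the primes P_{[n]∖G} for G in 𝒢 together with the primes P_{[n]∖supp_t(v)} for v in G(B_t(u)) are exactly the minimal primes of B_t(u), and this intersection is irredundant. -/
open Finset MvPolynomial

/-! Common definitions for principal vector-spread Borel ideals
(Crupi–Ficarra–Lax, "Principal vector-spread Borel ideals").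

Throughout, `S = K[x_1,…,x_n]` is realized as `MvPolynomial (Fin n) K`, and the
variable `x_p` (1-based position `p ∈ [1,n]`) is `X (p-1)`. -/

/-- The variable `x_p` of `K[x_1,…,x_n]`, for a 1-based position `p ∈ [1,n]`. -/
noncomputable def xv (K : Type*) [Field K] (n : ℕ) [NeZero n] (p : ℕ) :
    MvPolynomial (Fin n) K := MvPolynomial.X (Fin.ofNat n (p - 1 : ℕ))

/-- The squarefree monomial `x_{i 1} ⋯ x_{i e}` determined by the index function `i`. -/
noncomputable def monOf (K : Type*) [Field K] (n : ℕ) [NeZero n] (e : ℕ) (i : ℕ → ℕ) :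
    MvPolynomial (Fin n) K := ∏ r ∈ Finset.Icc 1 e, xv K n (i r)

/-- Index functions of the `t`-spread monomials `x_{i 1} ⋯ x_{i e}` with `i r ≤ J r` for
all `r = 1,…,e`.  (These monomials form the minimal monomial generating set of the
principal `t`-spread Borel ideal `B_t(x_{J 1} ⋯ x_{J e})`.) -/
def spreadIdx (e : ℕ) (t J : ℕ → ℕ) : Set (ℕ → ℕ) :=
  {i | (∀ r, 1 ≤ r → r ≤ e → 1 ≤ i r ∧ i r ≤ J r) ∧
    (∀ r, 1 ≤ r → r + 1 ≤ e → i r + t r ≤ i (r + 1))}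

/-- The principal `t`-spread Borel ideal `B_t(x_{J 1} ⋯ x_{J e})`: the ideal generated by
all `t`-spread monomials `x_{i 1} ⋯ x_{i e}` with `i r ≤ J r` for all `r`. -/
noncomputable def tBorel (K : Type*) [Field K] (n : ℕ) [NeZero n] (e : ℕ) (t J : ℕ → ℕ) :
    Ideal (MvPolynomial (Fin n) K) :=
  Ideal.span ((fun i => monOf K n e i) '' spreadIdx e t J)

/-- The monomial prime ideal `P_A = (x_p : p ∈ A)`, for a set `A` of 1-based positions. -/
noncomputable def pA (K : Type*) [Field K] (n : ℕ) [NeZero n] (A : Set ℕ) :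
    Ideal (MvPolynomial (Fin n) K) := Ideal.span (xv K n '' A)

/-- The `t`-spread support `supp_t(x_{i 1} ⋯ x_{i e}) = ⋃_{s=1}^{e-1} [i s, i s + t s - 1]`. -/
def tSupp (e : ℕ) (t : ℕ → ℕ) (i : ℕ → ℕ) : Set ℕ :=
  ⋃ s ∈ Finset.Icc 1 (e - 1), Set.Icc (i s) (i s + t s - 1)

/-- The `k`-th symbolic power of a (squarefree monomial) ideal: the intersection of the
`k`-th powers of its minimal primes. -/
noncomputable def symbPow {R : Type*} [CommRing R] (I : Ideal R) (k : ℕ) : Ideal R :=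
  ⨅ P ∈ I.minimalPrimes, P ^ k

/-- The Alexander dual `⨅_{v} P_{supp v}` of the squarefree monomial ideal whose minimal
monomial generators are the degree `e` squarefree monomials indexed by `gen`. -/
noncomputable def alexDualOf (K : Type*) [Field K] (n : ℕ) [NeZero n] (e : ℕ)
    (gen : Set (ℕ → ℕ)) : Ideal (MvPolynomial (Fin n) K) :=
  ⨅ i ∈ gen, pA K n (i '' Set.Icc 1 e)

/-- The height of an ideal: the infimum of the heights of its minimal primes, the height
of a prime being its height in the poset of prime ideals. -/
noncomputable def idealHeight {R : Type*} [CommRing R] (I : Ideal R) : ℕ∞ :=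
  ⨅ (p : PrimeSpectrum R) (_ : p.asIdeal ∈ I.minimalPrimes), Order.height p

/-- The depth of the module `M` with respect to the ideal `P`: the supremum of the lengths
of `M`-regular sequences consisting of elements of `P`. -/
noncomputable def depthWrt (R : Type*) (M : Type*) [CommRing R] [AddCommGroup M]
    [Module R M] (P : Ideal R) : ℕ∞ :=
  ⨆ (k : ℕ) (_ : ∃ x : Fin k → R, (∀ a, x a ∈ P) ∧
    RingTheory.Sequence.IsRegular M (List.ofFn x)), (k : ℕ∞)

/-- The (Krull) dimension of a module `M`: the Krull dimension of `R / ann M`. -/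
noncomputable def modKrullDim (R : Type*) (M : Type*) [CommRing R] [AddCommGroup M]
    [Module R M] : WithBot ℕ∞ := ringKrullDim (R ⧸ Module.annihilator R M)

/-- A module is Cohen–Macaulay (with respect to the ideal `P`, e.g. the graded maximal
ideal) if its depth equals its Krull dimension. -/
def IsCohenMacaulayMod (R : Type*) (M : Type*) [CommRing R] [AddCommGroup M] [Module R M]
    (P : Ideal R) : Prop := (depthWrt R M P : WithBot ℕ∞) = modKrullDim R M

/-- The depth of a local ring: max length of a regular sequence in the maximal ideal. -/
noncomputable def ringDepth (A : Type*) [CommRing A] [IsLocalRing A] : ℕ∞ :=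
  depthWrt A A (IsLocalRing.maximalIdeal A)

/-- A local ring is Cohen–Macaulay if its depth equals its Krull dimension. -/
def IsCohenMacaulayLocalRing (A : Type*) [CommRing A] [IsLocalRing A] : Prop :=
  (ringDepth A : WithBot ℕ∞) = ringKrullDim A

/-- A (commutative Noetherian) ring is Cohen–Macaulay if all its localizations at prime
ideals are Cohen–Macaulay local rings. -/
def IsCohenMacaulayRing (A : Type*) [CommRing A] : Prop :=
  ∀ (P : Ideal A) (hP : P.IsPrime), haveI := hP
    IsCohenMacaulayLocalRing (Localization.AtPrime P)

/-- The analytic spread of `I`: the Krull dimension of `R(I)/m R(I)`, where `R(I)` is the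
Rees algebra of `I` and `m` the (graded maximal) ideal. -/
noncomputable def analyticSpread {R : Type*} [CommRing R] (m I : Ideal R) : WithBot ℕ∞ :=
  ringKrullDim (↥(reesAlgebra I) ⧸ Ideal.map (algebraMap R ↥(reesAlgebra I)) m)

/-- `{p,q}` is an edge of the linear relation graph of the monomial ideal whose minimal
generators are the degree `e` squarefree monomials indexed by `gen` (positions 1-based,
within `[1,n]`). -/
def lrEdge (K : Type*) [Field K] (n : ℕ) [NeZero n] (e : ℕ) (gen : Set (ℕ → ℕ))
    (p q : ℕ) : Prop :=
  1 ≤ p ∧ p ≤ n ∧ 1 ≤ q ∧ q ≤ n ∧ p ≠ q ∧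
    ∃ i ∈ gen, ∃ i' ∈ gen, xv K n p * monOf K n e i = xv K n q * monOf K n e i'

/-- A facet of a simplicial complex: a maximal face. -/
def isFacet (Δ : Set (Finset ℕ)) (F : Finset ℕ) : Prop :=
  F ∈ Δ ∧ ∀ G ∈ Δ, F ⊆ G → F = G

/-- Vertex decomposability of a simplicial complex (faces as finsets of vertices):
either a simplex (including the void complex and `{∅}`), or there is a vertex whose
deletion and link are vertex decomposable and every facet of the deletion is a facet. -/
inductive VDecomp : Set (Finset ℕ) → Prop
  | empty : VDecomp ∅
  | simplex (A : Finset ℕ) : VDecomp {F | F ⊆ A}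
  | step (Δ : Set (Finset ℕ)) (v : ℕ) (hv : ∃ F ∈ Δ, v ∈ F)
      (hdel : VDecomp {F ∈ Δ | v ∉ F})
      (hlink : VDecomp {F | F ∈ Δ ∧ v ∉ F ∧ insert v F ∈ Δ})
      (hfac : ∀ F, isFacet {F ∈ Δ | v ∉ F} F → isFacet Δ F) : VDecomp Δ

/-- The `a`-th layer `J (a+1) / J a` of a filtration of ideals, as an `R`-module. -/
abbrev layerOf {R : Type*} [CommRing R] {r : ℕ} (J : Fin (r + 1) → Ideal R) (a : Fin r) :=
  ↥(J a.succ) ⧸ (Submodule.comap (J a.succ).subtype (J a.castSucc))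

/-- The family of monomial primes appearing in the minimal primary decomposition of
`B_t(u)`: the primes `P_{[n]∖G}` for `G ∈ 𝒢` (where `G = supp_t(x_{l 1}⋯x_{l (s-1)} x_{j s})
∪ [j s + 1, n]` for a generator `x_{l 1}⋯x_{l (s-1)} x_{j s}` of `B_t(x_{j 1}⋯x_{j s})`,
`s = 1,…,d`), together with the primes `P_{[n]∖supp_t(v)}` for `v ∈ G(B_t(u))`. -/
def decompPrimes (K : Type*) [Field K] (n d : ℕ) [NeZero n] (t j : ℕ → ℕ) :
    Set (Ideal (MvPolynomial (Fin n) K)) :=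
  {P | (∃ s, 1 ≤ s ∧ s ≤ d ∧ ∃ i ∈ spreadIdx s t j, i s = j s ∧
          P = pA K n (Set.Icc 1 n \ (tSupp s t i ∪ Set.Icc (j s + 1) n))) ∨
    (∃ i ∈ spreadIdx d t j, P = pA K n (Set.Icc 1 n \ tSupp d t i))}

namespace CFLAux

/-- The `Fin n` index of the 1-based position `p`. -/
def tf (n : ℕ) [NeZero n] (p : ℕ) : Fin n := Fin.ofNat n (p - 1 : ℕ)

lemma tf_val {n : ℕ} [NeZero n] {p : ℕ} (h2 : p ≤ n) : (tf n p).val = p - 1 := by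
  have hn := Nat.pos_of_ne_zero (NeZero.ne n)
  show (p - 1) % n = p - 1
  exact Nat.mod_eq_of_lt (by omega)

lemma tf_inj {n : ℕ} [NeZero n] {p q : ℕ} (hp1 : 1 ≤ p) (hp2 : p ≤ n)
    (hq1 : 1 ≤ q) (hq2 : q ≤ n) (h : tf n p = tf n q) : p = q := by
  have := congrArg Fin.val h
  rw [tf_val hp2, tf_val hq2] at this
  omega

lemma xv_eq (K : Type*) [Field K] (n : ℕ) [NeZero n] (p : ℕ) :
    xv K n p = MvPolynomial.X (tf n p) := rfl

/-- Chain inequality for spread sequences. -/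
lemma spread_chain {t : ℕ → ℕ} {l : ℕ → ℕ} {s : ℕ}
    (hl : ∀ k, 1 ≤ k → k + 1 ≤ s → l k + t k ≤ l (k + 1)) :
    ∀ a, 1 ≤ a → ∀ b, a < b → b ≤ s → l a + t a ≤ l b := by
  intro a ha b
  induction b with
  | zero => omega
  | succ b ih =>
    intro hab hbs
    rcases Nat.lt_or_ge a b with h | h
    · have h1 := ih h (by omega)
      have h2 := hl b (by omega) hbs
      omega
    · have : a = b := by omega
      subst this
      exact hl a ha hbs

/-- **Collision lemma**: `s` spread points cannot all lie in the `s-1` spread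
intervals `[l k, l k + t k - 1]`, `k = 1, …, s-1`. -/
lemma collision {t l i : ℕ → ℕ} {s : ℕ} (hs : 1 ≤ s)
    (hl : ∀ k, 1 ≤ k → k + 1 ≤ s - 1 → l k + t k ≤ l (k + 1))
    (hl1 : ∀ k, 1 ≤ k → k ≤ s - 1 → 1 ≤ l k)
    (hi : ∀ r, 1 ≤ r → r + 1 ≤ s → i r + t r ≤ i (r + 1))
    (hmem : ∀ r, 1 ≤ r → r ≤ s →
      ∃ k, 1 ≤ k ∧ k ≤ s - 1 ∧ l k ≤ i r ∧ i r ≤ l k + t k - 1) :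
    False := by
  classical
  have hmem' : ∀ r, ∃ k, 1 ≤ r → r ≤ s →
      (1 ≤ k ∧ k ≤ s - 1 ∧ l k ≤ i r ∧ i r ≤ l k + t k - 1) := by
    intro r
    by_cases h1 : 1 ≤ r ∧ r ≤ s
    · obtain ⟨k, hk⟩ := hmem r h1.1 h1.2
      exact ⟨k, fun _ _ => hk⟩
    · exact ⟨1, fun ha hb => absurd ⟨ha, hb⟩ h1⟩
  choose f hf using hmem'
  have lchain := spread_chain (s := s - 1) hl
  have fmono : ∀ r, 1 ≤ r → r + 1 ≤ s → f r ≤ f (r + 1) := by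
    intro r h1 h2
    by_contra hlt
    push_neg at hlt
    obtain ⟨hk1, hk2, hk3, hk4⟩ := hf r h1 (by omega)
    obtain ⟨hk1', hk2', hk3', hk4'⟩ := hf (r + 1) (by omega) h2
    have hc := lchain (f (r + 1)) hk1' (f r) hlt hk2
    have hsp := hi r h1 h2
    have hll := hl1 (f (r + 1)) hk1' hk2'
    omega
  have hex : ∃ r, 1 ≤ r ∧ r ≤ s ∧ f r < r := by
    obtain ⟨hk1, hk2, _, _⟩ := hf s hs le_rfl
    exact ⟨s, hs, le_rfl, by omega⟩
  have hP := Nat.find_spec hex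
  set r0 := Nat.find hex with hr0def
  obtain ⟨h1, h2, h3⟩ := hP
  obtain ⟨q1, q2, q3, q4⟩ := hf r0 h1 h2
  have hr2 : 2 ≤ r0 := by omega
  have hnot := Nat.find_min hex (show r0 - 1 < r0 by omega)
  have hge : r0 - 1 ≤ f (r0 - 1) := by
    by_contra h
    exact hnot ⟨by omega, by omega, by omega⟩
  have hmono := fmono (r0 - 1) (by omega) (by omega)
  have e1 : r0 - 1 + 1 = r0 := by omega
  rw [e1] at hmono
  obtain ⟨g1, g2, g3, g4⟩ := hf (r0 - 1) (by omega) (by omega)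
  have hsp := hi (r0 - 1) (by omega) (by omega)
  rw [e1] at hsp
  have hfr0 : f r0 = r0 - 1 := by omega
  have hfr1 : f (r0 - 1) = r0 - 1 := by omega
  rw [hfr0] at q3 q4
  rw [hfr1] at g3 g4
  have hll := hl1 (r0 - 1) (by omega) (by omega)
  omega

end CFLAux
namespace CFLAux

variable {K : Type*} [Field K] {n : ℕ} [NeZero n]

lemma mem_pA_iff {A : Set ℕ} {q : MvPolynomial (Fin n) K} :
    q ∈ pA K n A ↔ ∀ m ∈ q.support, ∃ p ∈ A, (m : Fin n →₀ ℕ) (tf n p) ≠ 0 := by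
  have himg : xv K n '' A = MvPolynomial.X '' (tf n '' A) := by
    rw [Set.image_image]; rfl
  rw [pA, himg, mem_ideal_span_X_image]
  constructor
  · intro h m hm
    obtain ⟨i, ⟨p, hp, rfl⟩, hne⟩ := h m hm
    exact ⟨p, hp, hne⟩
  · intro h m hm
    obtain ⟨p, hp, hne⟩ := h m hm
    exact ⟨tf n p, ⟨p, hp, rfl⟩, hne⟩

lemma monOf_mem_pA {A : Set ℕ} {e r : ℕ} {i : ℕ → ℕ} (hr : r ∈ Finset.Icc 1 e)
    (hA : i r ∈ A) : monOf K n e i ∈ pA K n A := by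
  rw [monOf, ← Finset.mul_prod_erase _ _ hr]
  exact Ideal.mul_mem_right _ _ (Ideal.subset_span ⟨i r, hA, rfl⟩)

lemma pA_mono {A B : Set ℕ} (h : A ⊆ B) : pA K n A ≤ pA K n B :=
  Ideal.span_mono (Set.image_mono h)

lemma pA_le_pA_iff {A B : Set ℕ} (hA : A ⊆ Set.Icc 1 n) (hB : B ⊆ Set.Icc 1 n) :
    pA K n A ≤ pA K n B ↔ A ⊆ B := by
  constructor
  · intro h p hp
    have hx : xv K n p ∈ pA K n A := Ideal.subset_span ⟨p, hp, rfl⟩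
    have := mem_pA_iff.mp (h hx)
    rw [xv_eq] at this
    have hs : (MvPolynomial.X (tf n p) : MvPolynomial (Fin n) K).support
        = {Finsupp.single (tf n p) 1} := MvPolynomial.support_X
    obtain ⟨q, hq, hne⟩ := this (Finsupp.single (tf n p) 1)
      (by rw [hs]; exact Finset.mem_singleton_self _)
    rw [Finsupp.single_apply] at hne
    have heq : tf n p = tf n q := by
      by_contra hne'
      rw [if_neg hne'] at hne
      exact hne rfl
    have hpI := hA hp
    have hqI := hB hq
    rw [tf_inj hpI.1 hpI.2 hqI.1 hqI.2 heq]
    exact hq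
  · intro h
    exact pA_mono h

lemma pA_isPrime (A : Set ℕ) : (pA K n A).IsPrime := by
  classical
  set s : Set (Fin n) := tf n '' A with hsdef
  set g : Fin n → MvPolynomial (Fin n) K := fun a => if a ∈ s then 0 else MvPolynomial.X a
    with hg
  have hterm : ∀ (m' : Fin n →₀ ℕ) (c : K), MvPolynomial.aeval g (MvPolynomial.monomial m' c)
      = if ∀ a ∈ s, m' a = 0 then MvPolynomial.monomial m' c else 0 := by
    intro m' c
    rw [MvPolynomial.aeval_monomial]
    by_cases hcase : ∀ a ∈ s, m' a = 0
    · rw [if_pos hcase]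
      have hpr : (m'.prod fun i e => g i ^ e)
          = m'.prod fun i e => (MvPolynomial.X i : MvPolynomial (Fin n) K) ^ e := by
        apply Finsupp.prod_congr
        intro a ha
        have hns : a ∉ s := fun h => (Finsupp.mem_support_iff.mp ha) (hcase a h)
        simp [hg, hns]
      rw [MvPolynomial.algebraMap_eq, hpr, ← MvPolynomial.monomial_eq]
    · rw [if_neg hcase]
      push_neg at hcase
      obtain ⟨a, has, hma⟩ := hcase
      have ha' : a ∈ m'.support := Finsupp.mem_support_iff.mpr hma
      rw [Finsupp.prod, Finset.prod_eq_zero ha' (by simp [hg, has, zero_pow hma])]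
      ring
  have hpA : pA K n A = Ideal.span (MvPolynomial.X '' s) := by
    rw [pA, hsdef, Set.image_image]; rfl
  have hker : Ideal.span (MvPolynomial.X '' s)
      = RingHom.ker (MvPolynomial.aeval (R := K) g).toRingHom := by
    apply le_antisymm
    · rw [Ideal.span_le]
      rintro _ ⟨a, ha, rfl⟩
      simp [RingHom.mem_ker, hg, ha]
    · intro q hq
      rw [MvPolynomial.mem_ideal_span_X_image]
      intro m hm
      by_contra hcon
      push_neg at hcon
      have h0 : MvPolynomial.aeval g q = 0 := hq
      have hco : MvPolynomial.coeff m (MvPolynomial.aeval g q) = MvPolynomial.coeff m q := by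
        conv_lhs => rw [← MvPolynomial.support_sum_monomial_coeff q]
        rw [map_sum, MvPolynomial.coeff_sum]
        rw [Finset.sum_eq_single m]
        · rw [hterm m (MvPolynomial.coeff m q), if_pos hcon, MvPolynomial.coeff_monomial,
            if_pos rfl]
        · intro m' _ hne
          rw [hterm]
          split
          · rw [MvPolynomial.coeff_monomial, if_neg hne]
          · exact MvPolynomial.coeff_zero m
        · intro hnm
          exact absurd hm hnm
      rw [h0] at hco
      simp only [MvPolynomial.coeff_zero] at hco
      exact (MvPolynomial.mem_support_iff.mp hm) hco.symm
  rw [hpA, hker]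
  exact RingHom.ker_isPrime _

end CFLAux
namespace CFLAux

variable {K : Type*} [Field K] {n : ℕ} [NeZero n]

/-- The exponent vector of `monOf K n e i`. -/
noncomputable def expE (n : ℕ) [NeZero n] (e : ℕ) (i : ℕ → ℕ) : Fin n →₀ ℕ :=
  ∑ r ∈ Finset.Icc 1 e, Finsupp.single (tf n (i r)) 1

lemma monOf_eq_monomial (e : ℕ) (i : ℕ → ℕ) :
    monOf K n e i = MvPolynomial.monomial (expE n e i) (1 : K) := by
  rw [expE, MvPolynomial.monomial_sum_one, monOf]
  exact Finset.prod_congr rfl fun r _ => rfl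

lemma mem_tBorel_iff {d : ℕ} {t j : ℕ → ℕ} {q : MvPolynomial (Fin n) K} :
    q ∈ tBorel K n d t j ↔
      ∀ m ∈ q.support, ∃ i ∈ spreadIdx d t j, expE n d i ≤ m := by
  have himg : (fun i => monOf K n d i) '' spreadIdx d t j
      = (fun m => MvPolynomial.monomial m (1 : K)) '' (expE n d '' spreadIdx d t j) := by
    rw [Set.image_image]
    exact Set.image_congr fun i _ => monOf_eq_monomial d i
  rw [tBorel, himg, MvPolynomial.mem_ideal_span_monomial_image]
  constructor
  · intro h m hm
    obtain ⟨si, ⟨i, hi, rfl⟩, hle⟩ := h m hm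
    exact ⟨i, hi, hle⟩
  · intro h m hm
    obtain ⟨i, hi, hle⟩ := h m hm
    exact ⟨expE n d i, ⟨i, hi, rfl⟩, hle⟩

lemma expE_le {e : ℕ} {i : ℕ → ℕ} {m : Fin n →₀ ℕ}
    (hmono : ∀ r r', 1 ≤ r → r < r' → r' ≤ e → i r < i r')
    (hbd : ∀ r, 1 ≤ r → r ≤ e → 1 ≤ i r ∧ i r ≤ n)
    (hm : ∀ r, 1 ≤ r → r ≤ e → m (tf n (i r)) ≠ 0) :
    expE n e i ≤ m := by
  rw [Finsupp.le_def]
  intro a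
  rw [expE, Finsupp.finset_sum_apply]
  simp only [Finsupp.single_apply]
  by_cases hex : ∃ r ∈ Finset.Icc 1 e, tf n (i r) = a
  · obtain ⟨r0, hr0, hr0a⟩ := hex
    rw [Finset.sum_eq_single_of_mem r0 hr0]
    · rw [if_pos hr0a]
      have := hm r0 (Finset.mem_Icc.mp hr0).1 (Finset.mem_Icc.mp hr0).2
      rw [hr0a] at this
      omega
    · intro r hr hne
      rw [if_neg]
      intro heq
      rw [← hr0a] at heq
      have hr' := Finset.mem_Icc.mp hr
      have hr0' := Finset.mem_Icc.mp hr0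
      have hb1 := hbd r hr'.1 hr'.2
      have hb2 := hbd r0 hr0'.1 hr0'.2
      have hieq : i r = i r0 := tf_inj hb1.1 hb1.2 hb2.1 hb2.2 heq
      rcases Nat.lt_trichotomy r r0 with h | h | h
      · exact absurd hieq (Nat.ne_of_lt (hmono r r0 hr'.1 h hr0'.2))
      · exact hne h
      · exact absurd hieq.symm (Nat.ne_of_lt (hmono r0 r hr0'.1 h hr'.2))
  · push_neg at hex
    rw [Finset.sum_eq_zero]
    · exact Nat.zero_le _
    · intro r hr
      rw [if_neg (hex r hr)]

/-- Every minimal generator of `B_t(u)` meets the complement of each set in the family. -/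
lemma gen_meets {d : ℕ} {t j : ℕ → ℕ} {i l : ℕ → ℕ} {s : ℕ}
    (hs1 : 1 ≤ s) (hsd : s ≤ d)
    (hjmono : ∀ p q, 1 ≤ p → p < q → q ≤ d → j p < j q) (hjd : j d = n)
    (hi : i ∈ spreadIdx d t j) (hl : l ∈ spreadIdx s t j) :
    ∃ r, 1 ≤ r ∧ r ≤ d ∧
      i r ∈ Set.Icc 1 n \ (tSupp s t l ∪ Set.Icc (j s + 1) n) := by
  by_contra hc
  push_neg at hc
  have hjn : ∀ r, 1 ≤ r → r ≤ d → j r ≤ n := by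
    intro r h1 h2
    rcases Nat.lt_or_ge r d with h | h
    · rw [← hjd]; exact le_of_lt (hjmono r d h1 h le_rfl)
    · have : r = d := by omega
      rw [this, hjd]
  apply collision (t := t) (l := l) (i := i) (s := s) hs1
  · intro k h1 h2
    exact hl.2 k h1 (by omega)
  · intro k h1 h2
    exact (hl.1 k h1 (by omega)).1
  · intro r h1 h2
    exact hi.2 r h1 (by omega)
  · intro r h1 h2
    have hbd := hi.1 r h1 (by omega)
    have hin : i r ∈ Set.Icc 1 n := ⟨hbd.1, hbd.2.trans (hjn r h1 (by omega))⟩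
    have hnA := hc r h1 (by omega)
    have hG : i r ∈ tSupp s t l ∪ Set.Icc (j s + 1) n := by
      by_contra hG
      exact hnA ⟨hin, hG⟩
    have hjrs : j r ≤ j s := by
      rcases Nat.lt_or_ge r s with h | h
      · exact le_of_lt (hjmono r s h1 h hsd)
      · have : r = s := by omega
        rw [this]
    rcases hG with hG | hG
    · rw [tSupp] at hG
      obtain ⟨k, hk, hik⟩ := Set.mem_iUnion₂.mp hG
      exact ⟨k, (Finset.mem_Icc.mp hk).1, (Finset.mem_Icc.mp hk).2,
        (Set.mem_Icc.mp hik).1, (Set.mem_Icc.mp hik).2⟩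
    · exfalso
      have h3 := (Set.mem_Icc.mp hG).1
      have h4 := hbd.2
      omega

end CFLAux
namespace CFLAux

/-- Greedy construction: `Ifun T t j r` is the `r`-th index of the greedily-built
`t`-spread monomial inside `T`. -/
noncomputable def Ifun (T : Set ℕ) (t j : ℕ → ℕ) : ℕ → ℕ
  | 0 => 0
  | r + 1 => sInf (T ∩ Set.Icc (if r = 0 then 1 else Ifun T t j r + t r) (j (r + 1)))

/-- The lower bound used at step `r` of the greedy construction. -/
noncomputable def loF (T : Set ℕ) (t j : ℕ → ℕ) (r : ℕ) : ℕ :=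
  if r ≤ 1 then 1 else Ifun T t j (r - 1) + t (r - 1)

lemma Ifun_eq (T : Set ℕ) (t j : ℕ → ℕ) {r : ℕ} (hr : 1 ≤ r) :
    Ifun T t j r = sInf (T ∩ Set.Icc (loF T t j r) (j r)) := by
  obtain ⟨r', rfl⟩ : ∃ r', r = r' + 1 := ⟨r - 1, by omega⟩
  rw [Ifun, loF]
  rcases Nat.eq_zero_or_pos r' with h | h
  · subst h; norm_num
  · rw [if_neg (by omega : ¬ r' = 0), if_neg (by omega : ¬ r' + 1 ≤ 1)]
    norm_num

/-- **Greedy covering lemma**: if `T ⊆ [1,n]` contains the support of no minimal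
generator of `B_t(u)`, then `T` is contained in some set of the family `𝒢`. -/
lemma greedy {n d : ℕ} {t j : ℕ → ℕ} (hd : 2 ≤ d)
    (ht : ∀ k, 1 ≤ k → k ≤ d - 1 → 1 ≤ t k)
    (hj1 : 1 ≤ j 1) (hjmono : ∀ p q, 1 ≤ p → p < q → q ≤ d → j p < j q)
    (hjd : j d = n) (hspread : ∀ k, 1 ≤ k → k ≤ d - 1 → j k + t k ≤ j (k + 1))
    {T : Set ℕ} (hT : T ⊆ Set.Icc 1 n)
    (h : ∀ i ∈ spreadIdx d t j, ∃ r, 1 ≤ r ∧ r ≤ d ∧ i r ∉ T) :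
    ∃ s, 1 ≤ s ∧ s ≤ d ∧ ∃ l ∈ spreadIdx s t j, l s = j s ∧
      T ⊆ tSupp s t l ∪ Set.Icc (j s + 1) n := by
  classical
  set I : ℕ → ℕ := Ifun T t j with hI
  set lo : ℕ → ℕ := loF T t j with hlo
  have hIr : ∀ r, 1 ≤ r → I r = sInf (T ∩ Set.Icc (lo r) (j r)) :=
    fun r hr => Ifun_eq T t j hr
  have hgood : ∀ r, 1 ≤ r → (T ∩ Set.Icc (lo r) (j r)).Nonempty →
      I r ∈ T ∧ lo r ≤ I r ∧ I r ≤ j r := by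
    intro r hr hne
    have hm := Nat.sInf_mem hne
    rw [← hIr r hr] at hm
    exact ⟨hm.1, (Set.mem_Icc.mp hm.2).1, (Set.mem_Icc.mp hm.2).2⟩
  have hlo1 : lo 1 = 1 := by rw [hlo, loF]; norm_num
  have hlosucc : ∀ r, 1 ≤ r → lo (r + 1) = I r + t r := by
    intro r hr
    rw [hlo, loF, if_neg (by omega : ¬ r + 1 ≤ 1)]
    norm_num
    rfl
  have hlopos : ∀ r, 1 ≤ r → r ≤ d → 1 ≤ lo r := by
    intro r h1 h2
    rcases Nat.eq_or_lt_of_le h1 with hcs | hcs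
    · rw [← hcs, hlo1]
    · obtain ⟨r', rfl⟩ : ∃ r', r = r' + 1 := ⟨r - 1, by omega⟩
      rw [hlosucc r' (by omega)]
      have := ht r' (by omega) (by omega)
      omega
  by_cases hbad : ∃ r, 1 ≤ r ∧ r ≤ d ∧ ¬ (T ∩ Set.Icc (lo r) (j r)).Nonempty
  · -- greedy fails at some step; let `r0` be the first such step
    obtain ⟨h01, h02, h03⟩ := Nat.find_spec hbad
    generalize hr0def : Nat.find hbad = r0 at h01 h02 h03
    have hfact : ∀ r, 1 ≤ r → r < r0 → I r ∈ T ∧ lo r ≤ I r ∧ I r ≤ j r := by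
      intro r h1 h2
      have hnb := Nat.find_min hbad (show r < Nat.find hbad by omega)
      have hne : (T ∩ Set.Icc (lo r) (j r)).Nonempty := by
        by_contra hne
        exact hnb ⟨h1, by omega, hne⟩
      exact hgood r h1 hne
    set l : ℕ → ℕ := fun r => if r = r0 then j r0 else I r with hldef
    have hjr0pos : 1 ≤ j r0 := by
      rcases Nat.eq_or_lt_of_le h01 with hcs | hcs
      · rw [← hcs]; exact hj1
      · exact le_of_lt (lt_of_le_of_lt hj1 (hjmono 1 r0 le_rfl hcs h02))
    have hlmem : l ∈ spreadIdx r0 t j := by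
      constructor
      · intro r h1 h2
        rcases Nat.eq_or_lt_of_le h2 with hcs | hcs
        · rw [hldef]; simp only [if_pos hcs]
          rw [hcs]
          exact ⟨hjr0pos, le_rfl⟩
        · have hfr := hfact r h1 hcs
          have hlp := hlopos r h1 (by omega)
          rw [hldef]; simp only [if_neg (by omega : ¬ r = r0)]
          exact ⟨by omega, hfr.2.2⟩
      · intro r h1 h2
        rcases Nat.eq_or_lt_of_le h2 with hcs | hcs
        · -- r + 1 = r0
          have hfr := hfact r h1 (by omega)
          have hsp := hspread r h1 (by omega)
          have hjeq : j (r + 1) = j r0 := by rw [hcs]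
          rw [hldef]
          simp only [if_pos hcs, if_neg (by omega : ¬ r = r0)]
          omega
        · have hfr := hfact (r + 1) (by omega) hcs
          rw [hlosucc r h1] at hfr
          rw [hldef]
          simp only [if_neg (by omega : ¬ r = r0), if_neg (by omega : ¬ r + 1 = r0)]
          exact hfr.2.1
    refine ⟨r0, h01, h02, l, hlmem, by rw [hldef]; simp, ?_⟩
    -- coverage
    intro x hx
    have hxI := hT hx
    have hx1 : 1 ≤ x := (Set.mem_Icc.mp hxI).1
    have hxn : x ≤ n := (Set.mem_Icc.mp hxI).2
    have hQ : ∀ r, 1 ≤ r → r ≤ r0 →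
        (∃ k, 1 ≤ k ∧ k ≤ r - 1 ∧ I k ≤ x ∧ x ≤ I k + t k - 1) ∨ lo r ≤ x := by
      intro r
      induction r with
      | zero => omega
      | succ r ih =>
        intro _ hrr0
        rcases Nat.eq_zero_or_pos r with hr | hr
        · subst hr; right; rw [hlo1]; exact hx1
        · rcases ih hr (by omega) with ⟨k, hk1, hk2, hk3, hk4⟩ | hlor
          · exact Or.inl ⟨k, hk1, by omega, hk3, hk4⟩
          · have hfr := hfact r hr (by omega)
            by_cases hcase : I r ≤ x ∧ x ≤ I r + t r - 1
            · exact Or.inl ⟨r, hr, by omega, hcase.1, hcase.2⟩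
            · right
              rw [hlosucc r hr]
              by_cases hxj : x ≤ j r
              · have hxin : x ∈ T ∩ Set.Icc (lo r) (j r) :=
                  ⟨hx, Set.mem_Icc.mpr ⟨hlor, hxj⟩⟩
                have hIlex : I r ≤ x := by
                  rw [hIr r hr]; exact Nat.sInf_le hxin
                omega
              · push_neg at hxj
                have : I r ≤ x := by
                  have := hfr.2.2
                  omega
                omega
    rcases hQ r0 h01 le_rfl with ⟨k, hk1, hk2, hk3, hk4⟩ | hlor
    · left
      rw [tSupp]
      apply Set.mem_iUnion₂.mpr
      refine ⟨k, Finset.mem_Icc.mpr ⟨hk1, hk2⟩, Set.mem_Icc.mpr ?_⟩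
      rw [hldef]
      simp only [if_neg (by omega : ¬ k = r0)]
      exact ⟨hk3, hk4⟩
    · right
      rw [Set.mem_Icc]
      refine ⟨?_, hxn⟩
      by_contra hxle
      push_neg at hxle
      exact h03 ⟨x, hx, Set.mem_Icc.mpr ⟨hlor, by omega⟩⟩
  · -- no failure: greedy builds a full generator inside `T`, contradiction
    exfalso
    push_neg at hbad
    have hfact : ∀ r, 1 ≤ r → r ≤ d → I r ∈ T ∧ lo r ≤ I r ∧ I r ≤ j r :=
      fun r h1 h2 => hgood r h1 (hbad r h1 h2)
    have hIs : I ∈ spreadIdx d t j := by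
      constructor
      · intro r h1 h2
        have hfr := hfact r h1 h2
        have hlp := hlopos r h1 h2
        exact ⟨by omega, hfr.2.2⟩
      · intro r h1 h2
        have hfr := hfact (r + 1) (by omega) h2
        rw [hlosucc r h1] at hfr
        exact hfr.2.1
    obtain ⟨r, h1, h2, hnT⟩ := h I hIs
    exact hnT (hfact r h1 h2).1

end CFLAux
namespace CFLAux

lemma j_le_n {n d : ℕ} {j : ℕ → ℕ}
    (hjmono : ∀ p q, 1 ≤ p → p < q → q ≤ d → j p < j q) (hjd : j d = n)
    {r : ℕ} (h1 : 1 ≤ r) (h2 : r ≤ d) : j r ≤ n := by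
  rcases Nat.eq_or_lt_of_le h2 with hcs | hcs
  · rw [hcs, hjd]
  · rw [← hjd]
    exact le_of_lt (hjmono r d h1 hcs le_rfl)

/-- The set `G = supp_t(x_{l 1} ⋯ x_{l (s-1)} x_{j s}) ∪ [j s + 1, n]` as a `Finset`. -/
def GFin (n : ℕ) (t j : ℕ → ℕ) (s : ℕ) (l : ℕ → ℕ) : Finset ℕ :=
  ((Finset.Icc 1 (s - 1)).biUnion fun k => Finset.Icc (l k) (l k + t k - 1)) ∪
    Finset.Icc (j s + 1) n

lemma coe_GFin (n : ℕ) (t j : ℕ → ℕ) (s : ℕ) (l : ℕ → ℕ) :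
    (GFin n t j s l : Set ℕ) = tSupp s t l ∪ Set.Icc (j s + 1) n := by
  ext x
  simp only [GFin, tSupp, Finset.coe_union, Set.mem_union, Finset.mem_coe,
    Finset.mem_biUnion, Finset.mem_Icc, Set.mem_iUnion, Set.mem_Icc, exists_prop]

lemma GFin_card {n d : ℕ} {t j : ℕ → ℕ} {s : ℕ} {l : ℕ → ℕ}
    (ht : ∀ k, 1 ≤ k → k ≤ d - 1 → 1 ≤ t k)
    (hjmono : ∀ p q, 1 ≤ p → p < q → q ≤ d → j p < j q)
    (hjd : j d = n)
    (hspread : ∀ k, 1 ≤ k → k ≤ d - 1 → j k + t k ≤ j (k + 1))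
    (hs1 : 1 ≤ s) (hsd : s ≤ d) (hl : l ∈ spreadIdx s t j) :
    (GFin n t j s l).card + j s = (∑ k ∈ Finset.Icc 1 (s - 1), t k) + n := by
  classical
  have hjsn : j s ≤ n := j_le_n hjmono hjd hs1 hsd
  have hmax : ∀ k, 1 ≤ k → k ≤ s - 1 → l k + t k ≤ j s := by
    intro k h1 h2
    have hb := (hl.1 k h1 (by omega)).2
    have hsp := hspread k h1 (by omega)
    have hj2 : j (k + 1) ≤ j s := by
      rcases Nat.eq_or_lt_of_le (show k + 1 ≤ s by omega) with hcs | hcs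
      · rw [hcs]
      · exact le_of_lt (hjmono (k + 1) s (by omega) hcs hsd)
    omega
  have hdisj : ∀ x ∈ Finset.Icc 1 (s - 1), ∀ y ∈ Finset.Icc 1 (s - 1), x ≠ y →
      Disjoint (Finset.Icc (l x) (l x + t x - 1)) (Finset.Icc (l y) (l y + t y - 1)) := by
    intro x hx y hy hne
    rw [Finset.disjoint_left]
    intro a hax hay
    rw [Finset.mem_Icc] at hax hay
    have hxI := Finset.mem_Icc.mp hx
    have hyI := Finset.mem_Icc.mp hy
    rcases Nat.lt_or_ge x y with hc | hc
    · have hch := spread_chain (s := s) hl.2 x hxI.1 y hc (by omega)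
      have htx := ht x hxI.1 (by omega)
      omega
    · have hyx : y < x := by omega
      have hch := spread_chain (s := s) hl.2 y hyI.1 x hyx (by omega)
      have hty := ht y hyI.1 (by omega)
      omega
  have hbi : ((Finset.Icc 1 (s - 1)).biUnion fun k => Finset.Icc (l k) (l k + t k - 1)).card
      = ∑ k ∈ Finset.Icc 1 (s - 1), t k := by
    rw [Finset.card_biUnion hdisj]
    apply Finset.sum_congr rfl
    intro k hk
    have hkI := Finset.mem_Icc.mp hk
    have htk := ht k hkI.1 (by omega)
    have hlk := (hl.1 k hkI.1 (by omega)).1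
    rw [Nat.card_Icc]
    omega
  have hdisj2 : Disjoint
      ((Finset.Icc 1 (s - 1)).biUnion fun k => Finset.Icc (l k) (l k + t k - 1))
      (Finset.Icc (j s + 1) n) := by
    rw [Finset.disjoint_left]
    intro a ha ha2
    rw [Finset.mem_biUnion] at ha
    obtain ⟨k, hk, hak⟩ := ha
    have hkI := Finset.mem_Icc.mp hk
    have hmk := hmax k hkI.1 hkI.2
    rw [Finset.mem_Icc] at hak ha2
    omega
  rw [GFin, Finset.card_union_of_disjoint hdisj2, hbi, Nat.card_Icc]
  omega

lemma jchain {d : ℕ} {t j : ℕ → ℕ}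
    (hspread : ∀ k, 1 ≤ k → k ≤ d - 1 → j k + t k ≤ j (k + 1)) :
    ∀ a, 1 ≤ a → ∀ b, a ≤ b → b ≤ d → j a + ∑ k ∈ Finset.Ico a b, t k ≤ j b := by
  intro a ha b
  induction b with
  | zero => intro h1 _; exact absurd h1 (by omega)
  | succ b ih =>
    intro h1 h2
    rcases Nat.eq_or_lt_of_le h1 with hcs | hcs
    · rw [← hcs, Finset.Ico_self, Finset.sum_empty]
      omega
    · have hih := ih (by omega) (by omega)
      have hsp := hspread b (by omega) (by omega)
      rw [Finset.sum_Ico_succ_top (show a ≤ b by omega)]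
      omega

/-- **Incomparability**: containment between two sets of the family forces equality. -/
lemma G_incomp {n d : ℕ} {t j : ℕ → ℕ}
    (ht : ∀ k, 1 ≤ k → k ≤ d - 1 → 1 ≤ t k)
    (hjmono : ∀ p q, 1 ≤ p → p < q → q ≤ d → j p < j q)
    (hjd : j d = n)
    (hspread : ∀ k, 1 ≤ k → k ≤ d - 1 → j k + t k ≤ j (k + 1))
    {s s' : ℕ} {l l' : ℕ → ℕ}
    (hs1 : 1 ≤ s) (hsd : s ≤ d) (hl : l ∈ spreadIdx s t j)
    (hs1' : 1 ≤ s') (hsd' : s' ≤ d) (hl' : l' ∈ spreadIdx s' t j)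
    (hsub : tSupp s t l ∪ Set.Icc (j s + 1) n ⊆ tSupp s' t l' ∪ Set.Icc (j s' + 1) n) :
    tSupp s t l ∪ Set.Icc (j s + 1) n = tSupp s' t l' ∪ Set.Icc (j s' + 1) n := by
  have hss' : s ≤ s' := by
    by_contra hlt
    push_neg at hlt
    apply collision (t := t) (l := l') (i := l) (s := s') hs1'
    · intro k h1 h2; exact hl'.2 k h1 (by omega)
    · intro k h1 h2; exact (hl'.1 k h1 (by omega)).1
    · intro r h1 h2; exact hl.2 r h1 (by omega)
    · intro r h1 h2
      have hbd := hl.1 r h1 (by omega)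
      have htr := ht r h1 (by omega)
      have hmem : l r ∈ tSupp s t l := by
        rw [tSupp]
        exact Set.mem_iUnion₂.mpr ⟨r, Finset.mem_Icc.mpr ⟨h1, by omega⟩,
          Set.mem_Icc.mpr ⟨le_rfl, by omega⟩⟩
      have hin := hsub (Set.mem_union_left _ hmem)
      have hjrs : j r ≤ j s' := by
        rcases Nat.eq_or_lt_of_le (show r ≤ s' by omega) with hcs | hcs
        · rw [hcs]
        · exact le_of_lt (hjmono r s' h1 hcs hsd')
      rcases hin with hG | hG
      · rw [tSupp] at hG
        obtain ⟨k, hk, hik⟩ := Set.mem_iUnion₂.mp hG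
        exact ⟨k, (Finset.mem_Icc.mp hk).1, (Finset.mem_Icc.mp hk).2,
          (Set.mem_Icc.mp hik).1, (Set.mem_Icc.mp hik).2⟩
      · exfalso
        have h3 := (Set.mem_Icc.mp hG).1
        have h4 := hbd.2
        omega
  have hIcoIcc : ∀ x : ℕ, Finset.Icc 1 (x - 1) = Finset.Ico 1 x := by
    intro x; ext y
    simp only [Finset.mem_Icc, Finset.mem_Ico]
    omega
  have hcard := GFin_card ht hjmono hjd hspread hs1 hsd hl
  have hcard' := GFin_card ht hjmono hjd hspread hs1' hsd' hl'
  have hsplit : ∑ k ∈ Finset.Ico 1 s, t k + ∑ k ∈ Finset.Ico s s', t k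
      = ∑ k ∈ Finset.Ico 1 s', t k := Finset.sum_Ico_consecutive _ hs1 hss'
  have hjc := jchain hspread s hs1 s' hss' hsd'
  have hjsn : j s ≤ n := j_le_n hjmono hjd hs1 hsd
  have hjsn' : j s' ≤ n := j_le_n hjmono hjd hs1' hsd'
  rw [hIcoIcc s] at hcard
  rw [hIcoIcc s'] at hcard'
  have hle : (GFin n t j s' l').card ≤ (GFin n t j s l).card := by omega
  rw [← coe_GFin, ← coe_GFin] at hsub ⊢
  exact Set.eq_of_subset_of_ncard_le hsub
    (by rw [Set.ncard_coe_finset, Set.ncard_coe_finset]; exact hle)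
    (Finset.finite_toSet _)

end CFLAux
namespace CFLAux

variable {K : Type*} [Field K] {n : ℕ} [NeZero n]

lemma G_sub_Icc {d : ℕ} {t j : ℕ → ℕ} {s : ℕ} {l : ℕ → ℕ}
    (hjmono : ∀ p q, 1 ≤ p → p < q → q ≤ d → j p < j q) (hjd : j d = n)
    (hspread : ∀ k, 1 ≤ k → k ≤ d - 1 → j k + t k ≤ j (k + 1))
    (hs1 : 1 ≤ s) (hsd : s ≤ d) (hl : l ∈ spreadIdx s t j) :
    tSupp s t l ∪ Set.Icc (j s + 1) n ⊆ Set.Icc 1 n := by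
  intro x hx
  rcases hx with hx | hx
  · rw [tSupp] at hx
    obtain ⟨k, hk, hik⟩ := Set.mem_iUnion₂.mp hx
    have hkI := Finset.mem_Icc.mp hk
    have hb := hl.1 k hkI.1 (by omega)
    have hsp := hspread k hkI.1 (by omega)
    have hjn : j (k + 1) ≤ n := j_le_n hjmono hjd (by omega) (by omega)
    have hik' := Set.mem_Icc.mp hik
    exact Set.mem_Icc.mpr ⟨by omega, by omega⟩
  · have hik' := Set.mem_Icc.mp hx
    exact Set.mem_Icc.mpr ⟨by omega, hik'.2⟩

lemma decompPrimes_norm {d : ℕ} {t j : ℕ → ℕ} (hd : 2 ≤ d)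
    (hjd : j d = n)
    (hspread : ∀ k, 1 ≤ k → k ≤ d - 1 → j k + t k ≤ j (k + 1))
    {P : Ideal (MvPolynomial (Fin n) K)} :
    P ∈ decompPrimes K n d t j ↔
      ∃ s l, (1 ≤ s ∧ s ≤ d ∧ l ∈ spreadIdx s t j ∧ l s = j s) ∧
        P = pA K n (Set.Icc 1 n \ (tSupp s t l ∪ Set.Icc (j s + 1) n)) := by
  have hn1 : 1 ≤ n := Nat.pos_of_ne_zero (NeZero.ne n)
  constructor
  · rintro (⟨s, hs1, hsd, i, hi, his, rfl⟩ | ⟨i, hi, rfl⟩)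
    · exact ⟨s, i, ⟨hs1, hsd, hi, his⟩, rfl⟩
    · refine ⟨d, fun r => if r = d then j d else i r, ⟨by omega, le_rfl, ?_, by simp⟩, ?_⟩
      · constructor
        · intro r h1 h2
          by_cases hr : r = d
          · simp only [if_pos hr]
            have hjdn : j d = n := hjd
            exact ⟨by omega, by rw [hr]⟩
          · simp only [if_neg hr]
            exact hi.1 r h1 h2
        · intro r h1 h2
          by_cases hr : r + 1 = d
          · have hb := (hi.1 r h1 (by omega)).2
            have hsp := hspread r h1 (by omega)
            have hje : j (r + 1) = j d := by rw [hr]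
            simp only [if_neg (show ¬ r = d by omega), if_pos hr]
            omega
          · simp only [if_neg (show ¬ r = d by omega), if_neg hr]
            exact hi.2 r h1 h2
      · have h1 : Set.Icc (j d + 1) n = (∅ : Set ℕ) := by
          rw [hjd]
          exact Set.Icc_eq_empty (by omega)
        have h2 : tSupp d t (fun r => if r = d then j d else i r) = tSupp d t i := by
          rw [tSupp, tSupp]
          apply Set.iUnion₂_congr
          intro k hk
          have hkd : ¬ k = d := by
            have := Finset.mem_Icc.mp hk
            omega
          simp only [if_neg hkd]
        rw [h2, h1, Set.union_empty]
  · rintro ⟨s, l, ⟨hs1, hsd, hl, hls⟩, rfl⟩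
    exact Or.inl ⟨s, hs1, hsd, l, hl, hls, rfl⟩

lemma decompPrimes_finite (d : ℕ) (t j : ℕ → ℕ) :
    (decompPrimes K n d t j).Finite := by
  apply Set.Finite.subset
    (Set.Finite.image (pA K n) (Set.Finite.finite_subsets (Set.finite_Icc 1 n)))
  rintro P hP
  rcases hP with ⟨s, _, _, i, _, _, rfl⟩ | ⟨i, _, rfl⟩
  · exact ⟨_, Set.diff_subset, rfl⟩
  · exact ⟨_, Set.diff_subset, rfl⟩

end CFLAux
/-- **Theorem (minimal primary decomposition of `B_t(u)`).**
`B_t(u) = (⋂_{G ∈ 𝒢} P_{[n]∖G}) ∩ (⋂_{v ∈ G(B_t(u))} P_{[n]∖supp_t(v)})`; these primes are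
exactly the minimal primes of `B_t(u)`, and the intersection is irredundant. -/
theorem stmt0 (K : Type*) [Field K] (n d : ℕ) [NeZero n] (t j : ℕ → ℕ)
    (hd : 2 ≤ d) (ht : ∀ k, 1 ≤ k → k ≤ d - 1 → 1 ≤ t k)
    (hj1 : 1 ≤ j 1) (hjmono : ∀ p q, 1 ≤ p → p < q → q ≤ d → j p < j q)
    (hjd : j d = n) (hspread : ∀ k, 1 ≤ k → k ≤ d - 1 → j k + t k ≤ j (k + 1)) :
    tBorel K n d t j = sInf (decompPrimes K n d t j) ∧
    (tBorel K n d t j).minimalPrimes = decompPrimes K n d t j ∧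
    ∀ P ∈ decompPrimes K n d t j,
      ¬ sInf (decompPrimes K n d t j \ {P}) ≤ tBorel K n d t j := by
  classical
  have hnorm := fun (P : Ideal (MvPolynomial (Fin n) K)) (hP : P ∈ decompPrimes K n d t j) =>
    (CFLAux.decompPrimes_norm hd hjd hspread).mp hP
  have hprime : ∀ P ∈ decompPrimes K n d t j, P.IsPrime := by
    intro P hP
    obtain ⟨s, l, _, rfl⟩ := hnorm P hP
    exact CFLAux.pA_isPrime _
  -- incomparability of the primes in the family
  have hincomp : ∀ P ∈ decompPrimes K n d t j, ∀ Q ∈ decompPrimes K n d t j,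
      Q ≤ P → Q = P := by
    intro P hP Q hQ hle
    obtain ⟨s, l, ⟨hs1, hsd, hl, _⟩, rfl⟩ := hnorm P hP
    obtain ⟨s', l', ⟨hs1', hsd', hl', _⟩, rfl⟩ := hnorm Q hQ
    rw [CFLAux.pA_le_pA_iff Set.diff_subset Set.diff_subset] at hle
    have hGsub : (tSupp s t l ∪ Set.Icc (j s + 1) n)
        ⊆ (tSupp s' t l' ∪ Set.Icc (j s' + 1) n) := by
      intro x hx
      have hxI : x ∈ Set.Icc 1 n :=
        CFLAux.G_sub_Icc hjmono hjd hspread hs1 hsd hl hx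
      by_contra hxg
      exact (hle ⟨hxI, hxg⟩).2 hx
    have hGeq := CFLAux.G_incomp ht hjmono hjd hspread hs1 hsd hl hs1' hsd' hl' hGsub
    rw [hGeq]
  -- the decomposition
  have heq : tBorel K n d t j = sInf (decompPrimes K n d t j) := by
    apply le_antisymm
    · apply le_sInf
      intro P hP
      obtain ⟨s, l, ⟨hs1, hsd, hl, _⟩, rfl⟩ := hnorm P hP
      rw [tBorel, Ideal.span_le]
      rintro _ ⟨i, hi, rfl⟩
      obtain ⟨r, h1, h2, hr⟩ := CFLAux.gen_meets hs1 hsd hjmono hjd hi hl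
      exact CFLAux.monOf_mem_pA (Finset.mem_Icc.mpr ⟨h1, h2⟩) hr
    · intro q hq
      rw [Ideal.mem_sInf] at hq
      rw [CFLAux.mem_tBorel_iff]
      intro m hm
      set T : Set ℕ := {p | p ∈ Set.Icc 1 n ∧ m (CFLAux.tf n p) ≠ 0} with hTdef
      have hT : T ⊆ Set.Icc 1 n := fun p hp => hp.1
      by_cases hcase : ∀ i ∈ spreadIdx d t j, ∃ r, 1 ≤ r ∧ r ≤ d ∧ i r ∉ T
      · exfalso
        obtain ⟨s, hs1, hsd, l, hl, hls, hcov⟩ :=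
          CFLAux.greedy hd ht hj1 hjmono hjd hspread hT hcase
        have hPmem : pA K n (Set.Icc 1 n \ (tSupp s t l ∪ Set.Icc (j s + 1) n))
            ∈ decompPrimes K n d t j := Or.inl ⟨s, hs1, hsd, l, hl, hls, rfl⟩
        have hqP := hq hPmem
        rw [CFLAux.mem_pA_iff] at hqP
        obtain ⟨p, hp, hne⟩ := hqP m hm
        have hpT : p ∈ T := ⟨hp.1, hne⟩
        exact hp.2 (hcov hpT)
      · push_neg at hcase
        obtain ⟨i, hi, hiT⟩ := hcase
        refine ⟨i, hi, CFLAux.expE_le ?_ ?_ ?_⟩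
        · intro r r' h1 h2 h3
          have hch := CFLAux.spread_chain (s := d) hi.2 r h1 r' h2 h3
          have htr := ht r h1 (by omega)
          omega
        · intro r h1 h2
          have hb := hi.1 r h1 h2
          exact ⟨hb.1, hb.2.trans (CFLAux.j_le_n hjmono hjd h1 h2)⟩
        · intro r h1 h2
          exact (hiT r h1 h2).2
  have hfin := CFLAux.decompPrimes_finite (K := K) (n := n) d t j
  have hSinf_le : ∀ Q : Ideal (MvPolynomial (Fin n) K), Q.IsPrime →
      sInf (decompPrimes K n d t j) ≤ Q → ∃ P ∈ decompPrimes K n d t j, P ≤ Q := by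
    intro Q hQp hle
    have h1 : (hfin.toFinset).inf id ≤ Q := by
      rw [Finset.inf_id_eq_sInf, Set.Finite.coe_toFinset]
      exact hle
    obtain ⟨P, hP, hPQ⟩ := (hQp.inf_le').mp h1
    exact ⟨P, hfin.mem_toFinset.mp hP, hPQ⟩
  have hmp : (tBorel K n d t j).minimalPrimes = decompPrimes K n d t j := by
    ext P
    constructor
    · rintro ⟨⟨hPp, hIP⟩, hmin⟩
      rw [heq] at hIP
      obtain ⟨P', hP', hP'P⟩ := hSinf_le P hPp hIP
      have hQle : P ≤ P' := hmin ⟨hprime P' hP', by rw [heq]; exact sInf_le hP'⟩ hP'P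
      rwa [le_antisymm hP'P hQle] at hP'
    · intro hP
      refine ⟨⟨hprime P hP, by rw [heq]; exact sInf_le hP⟩, ?_⟩
      intro Q hQ hQP
      obtain ⟨P', hP', hP'Q⟩ := hSinf_le Q hQ.1 (by rw [← heq]; exact hQ.2)
      have hPP : P' = P := hincomp P hP P' hP' (hP'Q.trans hQP)
      rw [← hPP]
      exact hP'Q
  refine ⟨heq, hmp, ?_⟩
  intro P hP hcon
  have hle : sInf (decompPrimes K n d t j \ {P}) ≤ P :=
    hcon.trans (by rw [heq]; exact sInf_le hP)
  have hfin' : (decompPrimes K n d t j \ {P}).Finite := hfin.subset Set.diff_subset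
  have h1 : (hfin'.toFinset).inf id ≤ P := by
    rw [Finset.inf_id_eq_sInf, Set.Finite.coe_toFinset]
    exact hle
  obtain ⟨Q, hQ, hQP⟩ := ((hprime P hP).inf_le').mp h1
  rw [hfin'.mem_toFinset] at hQ
  exact hQ.2 (hincomp P hP Q hQ.1 hQP)
end

section
/- For every v in G(B_t(u)), the monomial prime ideal P_{[n]∖supp_t(v)} contains B_t(u) and is a minimal prime of B_t(u). -/
open Finset MvPolynomial

section KillVars
variable {K : Type*} [Field K] {n : ℕ} [NeZero n]

open Classical in
noncomputable def killC (K : Type*) [Field K] (n : ℕ) [NeZero n] (C : Set (Fin n)) :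
    MvPolynomial (Fin n) K →+* MvPolynomial (Fin n) K :=
  (MvPolynomial.aeval (fun c => if c ∈ C then 0 else MvPolynomial.X c)).toRingHom

open Classical in
lemma killC_X (C : Set (Fin n)) (c : Fin n) :
    killC K n C (MvPolynomial.X c) = if c ∈ C then 0 else MvPolynomial.X c := by
  simp [killC]

lemma span_eq_ker (C : Set (Fin n)) :
    Ideal.span (MvPolynomial.X '' C : Set (MvPolynomial (Fin n) K))
      = RingHom.ker (killC K n C) := by
  classical
  apply le_antisymm
  · rw [Ideal.span_le]
    rintro _ ⟨c, hc, rfl⟩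
    simp [RingHom.mem_ker, killC_X, hc]
  · intro f hf
    have key : ∀ g : MvPolynomial (Fin n) K,
        g - killC K n C g ∈ Ideal.span (MvPolynomial.X '' C) := by
      intro g
      induction g using MvPolynomial.induction_on with
      | C a => simp [killC, MvPolynomial.algebraMap_eq]
      | add p q hp hq =>
        rw [map_add, ← sub_add_sub_comm]
        exact Ideal.add_mem _ hp hq
      | mul_X p c hp =>
        rw [map_mul, killC_X]
        by_cases hc : c ∈ C
        · simp only [hc, if_true, mul_zero, sub_zero]
          exact Ideal.mul_mem_left _ p (Ideal.subset_span ⟨c, hc, rfl⟩)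
        · simp only [hc, if_false]
          rw [← sub_mul]
          exact Ideal.mul_mem_right _ _ hp
    have h2 := key f
    rwa [RingHom.mem_ker.mp hf, sub_zero] at h2

lemma span_X_isPrime (C : Set (Fin n)) :
    (Ideal.span (MvPolynomial.X '' C : Set (MvPolynomial (Fin n) K))).IsPrime := by
  rw [span_eq_ker]
  exact RingHom.ker_isPrime _

lemma X_mem_span (C : Set (Fin n)) (q : Fin n)
    (h : MvPolynomial.X q ∈ Ideal.span (MvPolynomial.X '' C : Set (MvPolynomial (Fin n) K))) :
    q ∈ C := by
  classical
  rw [span_eq_ker, RingHom.mem_ker, killC_X] at h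
  by_contra hq
  rw [if_neg hq] at h
  exact MvPolynomial.X_ne_zero q h

lemma pA_eq (A : Set ℕ) :
    pA K n A = Ideal.span (MvPolynomial.X '' ((fun p => Fin.ofNat n (p - 1 : ℕ)) '' A)) := by
  rw [pA, Set.image_image]
  rfl

lemma pA_isPrime (A : Set ℕ) : (pA K n A).IsPrime := by
  rw [pA_eq]; exact span_X_isPrime _

lemma xv_mem_pA {A : Set ℕ} (hA : A ⊆ Set.Icc 1 n) {q : ℕ} (hq1 : 1 ≤ q) (hq2 : q ≤ n)
    (h : xv K n q ∈ pA K n A) : q ∈ A := by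
  rw [pA_eq, xv] at h
  obtain ⟨a, haA, hEq⟩ := X_mem_span _ _ h
  obtain ⟨ha1, ha2⟩ := hA haA
  have hlt : a - 1 < n := by omega
  have hlt' : q - 1 < n := by omega
  have : a - 1 = q - 1 := by
    have := congrArg Fin.val hEq
    rwa [Fin.val_ofNat, Fin.val_ofNat, Nat.mod_eq_of_lt hlt, Nat.mod_eq_of_lt hlt'] at this
  have : a = q := by omega
  rwa [← this]

end KillVars

section Comb

lemma mem_tSupp {e : ℕ} {t i : ℕ → ℕ} {x : ℕ} :
    x ∈ tSupp e t i ↔ ∃ s, 1 ≤ s ∧ s ≤ e - 1 ∧ i s ≤ x ∧ x ≤ i s + t s - 1 := by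
  simp only [tSupp, Set.mem_iUnion, Finset.mem_Icc, Set.mem_Icc, exists_prop]
  constructor
  · rintro ⟨s, ⟨h1, h2⟩, h3, h4⟩; exact ⟨s, h1, h2, h3, h4⟩
  · rintro ⟨s, h1, h2, h3, h4⟩; exact ⟨s, ⟨h1, h2⟩, h3, h4⟩

variable {d : ℕ} {t j : ℕ → ℕ}

lemma spread_strict (ht : ∀ k, 1 ≤ k → k ≤ d - 1 → 1 ≤ t k)
    {i : ℕ → ℕ} (hi : i ∈ spreadIdx d t j) :
    ∀ b a, 1 ≤ a → a < b → b ≤ d → i a + t a ≤ i b := by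
  intro b
  induction b with
  | zero => omega
  | succ b ih =>
    intro a ha hab hbd
    rcases Nat.lt_or_ge a b with h | h
    · have h1 := ih a ha h (by omega)
      have h2 := hi.2 b (by omega) (by omega)
      have h3 := ht b (by omega) (by omega)
      omega
    · have hab' : a = b := by omega
      subst hab'
      exact hi.2 a ha hbd

lemma spread_mono (ht : ∀ k, 1 ≤ k → k ≤ d - 1 → 1 ≤ t k)
    {i : ℕ → ℕ} (hi : i ∈ spreadIdx d t j) :
    ∀ a b, 1 ≤ a → a ≤ b → b ≤ d → i a ≤ i b := by
  intro a b ha hab hbd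
  rcases eq_or_lt_of_le hab with h | h
  · rw [h]
  · have h1 := spread_strict ht hi b a ha h hbd
    have h2 := ht a ha (by omega)
    omega

lemma exists_escape (hd : 2 ≤ d) (ht : ∀ k, 1 ≤ k → k ≤ d - 1 → 1 ≤ t k)
    {i i' : ℕ → ℕ} (hi : i ∈ spreadIdx d t j) (hi' : i' ∈ spreadIdx d t j) :
    ∃ r, 1 ≤ r ∧ r ≤ d ∧ i' r ∉ tSupp d t i := by
  by_cases hall : ∀ r, 1 ≤ r → r ≤ d → i r ≤ i' r
  · refine ⟨d, by omega, le_refl d, ?_⟩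
    rw [mem_tSupp]
    rintro ⟨s, hs1, hs2, hsl, hsr⟩
    have h1 := spread_strict ht hi d s hs1 (by omega) (le_refl d)
    have h2 := hall d (by omega) (le_refl d)
    have h3 := ht s hs1 hs2
    omega
  · push_neg at hall
    have hex : ∃ r, 1 ≤ r ∧ r ≤ d ∧ i' r < i r := by
      obtain ⟨r, h1, h2, h3⟩ := hall; exact ⟨r, h1, h2, h3⟩
    classical
    obtain ⟨hr1, hr2, hr3⟩ := Nat.find_spec hex
    refine ⟨Nat.find hex, hr1, hr2, ?_⟩
    rw [mem_tSupp]
    rintro ⟨s, hs1, hs2, hsl, hsr⟩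
    have hts := ht s hs1 hs2
    rcases Nat.lt_or_ge s (Nat.find hex) with h | h
    · have hmin : ¬(1 ≤ s ∧ s ≤ d ∧ i' s < i s) := Nat.find_min hex h
      have hstr := spread_strict ht hi' (Nat.find hex) s hs1 h hr2
      omega
    · have hmono := spread_mono ht hi (Nat.find hex) s hr1 h (by omega)
      omega

def chain (i t : ℕ → ℕ) (s p : ℕ) : ℕ → ℕ
  | 0 => p
  | m + 1 => max (i (s + 1 + m)) (chain i t s p m + t (s + 1 + m))

lemma exists_cover {n : ℕ} (hd : 2 ≤ d) (ht : ∀ k, 1 ≤ k → k ≤ d - 1 → 1 ≤ t k)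
    (hjd : j d = n) {i : ℕ → ℕ} (hi : i ∈ spreadIdx d t j) {p : ℕ}
    (hp1 : 1 ≤ p) (hp2 : p ≤ n) (hps : p ∉ tSupp d t i) :
    ∃ i'' ∈ spreadIdx d t j,
      ∀ r, 1 ≤ r → r ≤ d → i'' r = p ∨ i'' r ∈ tSupp d t i := by
  by_cases hcase : i (d - 1) + t (d - 1) ≤ p
  · refine ⟨fun r => if r ≤ d - 1 then i r else p, ⟨?_, ?_⟩, ?_⟩
    · intro r h1 h2
      beta_reduce
      by_cases h : r ≤ d - 1
      · simpa [h] using hi.1 r h1 (by omega)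
      · have hr : r = d := by omega
        rw [if_neg h, hr, hjd]
        exact ⟨hp1, hp2⟩
    · intro r h1 h2
      beta_reduce
      by_cases h : r + 1 ≤ d - 1
      · rw [if_pos (by omega), if_pos h]
        exact hi.2 r h1 h2
      · have hr : r = d - 1 := by omega
        rw [if_pos (by omega : r ≤ d - 1), if_neg (by omega), hr]
        exact hcase
    · intro r h1 h2
      beta_reduce
      by_cases h : r ≤ d - 1
      · right
        rw [if_pos h, mem_tSupp]
        have := ht r h1 h
        exact ⟨r, h1, h, le_refl _, by omega⟩
      · left
        rw [if_neg h]
  · have hd1 : 1 ≤ d - 1 := by omega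
    have hsex : ∃ s, s ≤ d - 2 ∧ (s = 0 ∨ (1 ≤ s ∧ i s + t s ≤ p)) ∧ p < i (s + 1) := by
      by_cases h1 : p < i 1
      · exact ⟨0, by omega, Or.inl rfl, by simpa using h1⟩
      · push_neg at h1
        classical
        have hspec : i (Nat.findGreatest (fun q => i q ≤ p) (d - 1)) ≤ p :=
          Nat.findGreatest_spec (P := fun q => i q ≤ p) hd1 h1
        have hge : 1 ≤ Nat.findGreatest (fun q => i q ≤ p) (d - 1) :=
          Nat.le_findGreatest hd1 h1
        have hsd : Nat.findGreatest (fun q => i q ≤ p) (d - 1) ≤ d - 1 :=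
          Nat.findGreatest_le _
        set s := Nat.findGreatest (fun q => i q ≤ p) (d - 1) with hsdef
        have hnotsupp : ¬(i s ≤ p ∧ p ≤ i s + t s - 1) := by
          intro hh
          exact hps (mem_tSupp.mpr ⟨s, hge, hsd, hh.1, hh.2⟩)
        have hts := ht s hge hsd
        have hstep : i s + t s ≤ p := by omega
        have hs2 : s ≤ d - 2 := by
          by_contra hcon
          have hsd1 : s = d - 1 := by omega
          rw [hsd1] at hstep
          exact hcase hstep
        have hlt : p < i (s + 1) := by
          have hk := Nat.findGreatest_is_greatest
            (by omega : Nat.findGreatest (fun q => i q ≤ p) (d - 1) < s + 1)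
            (by omega : s + 1 ≤ d - 1)
          omega
        exact ⟨s, hs2, Or.inr ⟨hge, hstep⟩, hlt⟩
    obtain ⟨s, hs2, hsor, hslt⟩ := hsex
    have hjs1 : i (s + 1) ≤ j (s + 1) := (hi.1 (s + 1) (by omega) (by omega)).2
    have F1 : ∀ m, 1 ≤ m → s + 1 + m ≤ d →
        i (s + m) ≤ chain i t s p m ∧ chain i t s p m ≤ i (s + m) + t (s + m) - 1 := by
      intro m
      induction m with
      | zero => omega
      | succ m ih =>
        intro _ hmd
        rcases Nat.eq_zero_or_pos m with hm0 | hm1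
        · subst hm0
          have hts := ht (s + 1) (by omega) (by omega)
          simp only [chain, Nat.add_zero, Nat.zero_add]
          omega
        · have ihm := ih (by omega) (by omega)
          have hsp := hi.2 (s + m) (by omega) (by omega)
          have hts := ht (s + 1 + m) (by omega) (by omega)
          have hts2 := ht (s + m) (by omega) (by omega)
          have e1 : s + 1 + m = s + m + 1 := by omega
          have e2 : s + (m + 1) = s + m + 1 := by omega
          rw [e1] at hts
          simp only [chain]
          rw [e1, e2]
          refine ⟨le_sup_left, ?_⟩
          apply sup_le <;> omega
    refine ⟨fun r => if r ≤ s then i r else chain i t s p (r - (s + 1)), ⟨?_, ?_⟩, ?_⟩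
    · intro r h1 h2
      beta_reduce
      by_cases h : r ≤ s
      · simpa [h] using hi.1 r h1 (by omega)
      · rw [if_neg h]
        rcases Nat.lt_or_ge r (s + 2) with hr | hr
        · have hr1 : r = s + 1 := by omega
          rw [hr1, show s + 1 - (s + 1) = 0 from by omega]
          simp only [chain]
          exact ⟨hp1, by omega⟩
        · have hF := F1 (r - (s + 1)) (by omega) (by omega)
          rw [show s + (r - (s + 1)) = r - 1 from by omega] at hF
          have hb1 := hi.1 (r - 1) (by omega) (by omega)
          have hsp := hi.2 (r - 1) (by omega) (by omega)
          rw [show r - 1 + 1 = r from by omega] at hsp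
          have hbr := hi.1 r h1 h2
          exact ⟨by omega, by omega⟩
    · intro r h1 h2
      beta_reduce
      by_cases h : r + 1 ≤ s
      · rw [if_pos (by omega), if_pos h]
        exact hi.2 r h1 h2
      · rw [if_neg (by omega : ¬ r + 1 ≤ s)]
        by_cases h' : r ≤ s
        · have hr : r = s := by omega
          rw [if_pos h', hr, show s + 1 - (s + 1) = 0 from by omega]
          simp only [chain]
          rcases hsor with h0 | ⟨_, hstep⟩
          · omega
          · exact hstep
        · rw [if_neg h']
          rw [show r + 1 - (s + 1) = (r - (s + 1)) + 1 from by omega]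
          simp only [chain]
          rw [show s + 1 + (r - (s + 1)) = r from by omega]
          omega
    · intro r h1 h2
      beta_reduce
      by_cases h : r ≤ s
      · right
        rw [if_pos h, mem_tSupp]
        have := ht r h1 (by omega)
        exact ⟨r, h1, by omega, le_refl _, by omega⟩
      · rw [if_neg h]
        rcases Nat.lt_or_ge r (s + 2) with hr | hr
        · left
          rw [show r - (s + 1) = 0 from by omega]
          rfl
        · right
          have hF := F1 (r - (s + 1)) (by omega) (by omega)
          rw [show s + (r - (s + 1)) = r - 1 from by omega] at hF
          exact mem_tSupp.mpr ⟨r - 1, by omega, by omega, hF.1, hF.2⟩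

end Comb

/-- For every generator `v ∈ G(B_t(u))` (given by its index function `i`), the monomial
prime `P_{[n]∖supp_t(v)}` contains `B_t(u)` and is a minimal prime of `B_t(u)`. -/
theorem stmt2 (K : Type*) [Field K] (n d : ℕ) [NeZero n] (t j : ℕ → ℕ)
    (hd : 2 ≤ d) (ht : ∀ k, 1 ≤ k → k ≤ d - 1 → 1 ≤ t k)
    (hj1 : 1 ≤ j 1) (hjmono : ∀ p q, 1 ≤ p → p < q → q ≤ d → j p < j q)
    (hjd : j d = n) (hspread : ∀ k, 1 ≤ k → k ≤ d - 1 → j k + t k ≤ j (k + 1)) :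
    ∀ i ∈ spreadIdx d t j,
      tBorel K n d t j ≤ pA K n (Set.Icc 1 n \ tSupp d t i) ∧
      pA K n (Set.Icc 1 n \ tSupp d t i) ∈ (tBorel K n d t j).minimalPrimes := by
  intro i hi
  have hjn : ∀ r, 1 ≤ r → r ≤ d → j r ≤ n := by
    intro r h1 h2
    rcases eq_or_lt_of_le h2 with h | h
    · rw [h, hjd]
    · rw [← hjd]; exact le_of_lt (hjmono r d h1 h (le_refl d))
  have hA : (Set.Icc 1 n \ tSupp d t i : Set ℕ) ⊆ Set.Icc 1 n := Set.diff_subset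
  haveI hPAprime := pA_isPrime (K := K) (n := n) (Set.Icc 1 n \ tSupp d t i)
  have hcont : tBorel K n d t j ≤ pA K n (Set.Icc 1 n \ tSupp d t i) := by
    rw [tBorel, Ideal.span_le]
    rintro _ ⟨i', hi', rfl⟩
    obtain ⟨r, hr1, hrd, hrs⟩ := exists_escape hd ht hi hi'
    have hb := hi'.1 r hr1 hrd
    have hmem : i' r ∈ (Set.Icc 1 n \ tSupp d t i : Set ℕ) :=
      ⟨⟨hb.1, le_trans hb.2 (hjn r hr1 hrd)⟩, hrs⟩
    have hx : xv K n (i' r) ∈ pA K n (Set.Icc 1 n \ tSupp d t i) :=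
      Ideal.subset_span (Set.mem_image_of_mem _ hmem)
    show monOf K n d i' ∈ (pA K n (Set.Icc 1 n \ tSupp d t i) : Set _)
    rw [SetLike.mem_coe, monOf]
    exact Ideal.IsPrime.prod_mem_iff.mpr ⟨r, Finset.mem_Icc.mpr ⟨hr1, hrd⟩, hx⟩
  refine ⟨hcont, ⟨pA_isPrime _, hcont⟩, ?_⟩
  rintro Q ⟨hQp, hQle⟩ hQP
  rw [pA, Ideal.span_le]
  rintro _ ⟨p, hp, rfl⟩
  obtain ⟨⟨hp1, hp2⟩, hps⟩ := hp
  obtain ⟨i'', hi'', hcov⟩ := exists_cover hd ht hjd hi hp1 hp2 hps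
  have h1 : monOf K n d i'' ∈ Q := hQle (Ideal.subset_span ⟨i'', hi'', rfl⟩)
  haveI := hQp
  rw [monOf] at h1
  obtain ⟨r, hr, hxr⟩ := Ideal.IsPrime.prod_mem_iff.mp h1
  rw [Finset.mem_Icc] at hr
  have hb := hi''.1 r hr.1 hr.2
  have hmemA : i'' r ∈ (Set.Icc 1 n \ tSupp d t i : Set ℕ) :=
    xv_mem_pA hA hb.1 (le_trans hb.2 (hjn r hr.1 hr.2)) (hQP hxr)
  have hep : i'' r = p := by
    rcases hcov r hr.1 hr.2 with h | h
    · exact h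
    · exact absurd h hmemA.2
  show xv K n p ∈ Q
  rw [← hep]
  exact hxr
end

section
/- Let Δ be the simplicial complex on the vertex set [n] whose faces are the subsets F ⊆ [n] such that the squarefree monomial prod_{i in F} x_i does not lie in B_t(u) (so B_t(u) is the Stanley-Reisner ideal of Δ). Then Δ is vertex decomposable. -/
open Finset MvPolynomial

/-- A `t`-spread "bad chain" of length `e`, contained in `F`, bounded by `b`,
starting at or above `μ`. -/
def HasChain (e : ℕ) (s b : ℕ → ℕ) (μ : ℕ) (F : Finset ℕ) : Prop :=
  ∃ c : ℕ → ℕ, (∀ r, 1 ≤ r → r ≤ e → c r ∈ F ∧ c r ≤ b r) ∧ μ ≤ c 1 ∧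
    ∀ r, 1 ≤ r → r + 1 ≤ e → c r + s r ≤ c (r + 1)

/-- The simplicial complex on ground set `A` whose faces are the chain-free subsets. -/
def Dc (A : Finset ℕ) (e : ℕ) (s b : ℕ → ℕ) (μ : ℕ) : Set (Finset ℕ) :=
  {F | F ⊆ A ∧ ¬ HasChain e s b μ F}

lemma hasChain_mono {e : ℕ} {s b : ℕ → ℕ} {μ : ℕ} {F G : Finset ℕ} (h : F ⊆ G) :
    HasChain e s b μ F → HasChain e s b μ G := by
  rintro ⟨c, h1, h2, h3⟩
  exact ⟨c, fun r hr hre => ⟨h (h1 r hr hre).1, (h1 r hr hre).2⟩, h2, h3⟩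

lemma chain_grow {e : ℕ} {s c : ℕ → ℕ}
    (hc : ∀ r, 1 ≤ r → r + 1 ≤ e → c r + s r ≤ c (r + 1)) (p : ℕ) (hp : 1 ≤ p) :
    ∀ q, p ≤ q → q ≤ e → c p + ∑ i ∈ Finset.Ico p q, s i ≤ c q := by
  intro q
  induction q with
  | zero => intro h1 _; omega
  | succ q ih =>
      intro hpq hqe
      rcases Nat.lt_or_ge p (q + 1) with h | h
      · have hpq' : p ≤ q := by omega
        rw [Finset.sum_Ico_succ_top hpq']
        have h1 := hc q (le_trans hp hpq') hqe
        have h2 := ih hpq' (by omega)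
        omega
      · have hpe : p = q + 1 := by omega
        subst hpe; simp

lemma sum_ge_card {e : ℕ} {s : ℕ → ℕ} (hs : ∀ r, 1 ≤ r → r + 1 ≤ e → 1 ≤ s r)
    {p q : ℕ} (hp : 1 ≤ p) (hq : q ≤ e) : q - p ≤ ∑ i ∈ Finset.Ico p q, s i := by
  calc q - p = ∑ _i ∈ Finset.Ico p q, 1 := by
        rw [Finset.sum_const, smul_eq_mul, mul_one, Nat.card_Ico]
  _ ≤ _ := Finset.sum_le_sum (fun i hi => by
        rw [Finset.mem_Ico] at hi; exact hs i (le_trans hp hi.1) (by omega))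

lemma chain_lt {e : ℕ} {s c : ℕ → ℕ} (hs : ∀ r, 1 ≤ r → r + 1 ≤ e → 1 ≤ s r)
    (h3 : ∀ r, 1 ≤ r → r + 1 ≤ e → c r + s r ≤ c (r + 1)) {p q : ℕ}
    (hp : 1 ≤ p) (hpq : p ≤ q) (hq : q ≤ e) : c p + (q - p) ≤ c q := by
  have h1 := chain_grow h3 p hp q hpq hq
  have h2 := sum_ge_card hs hp hq
  omega

lemma vdec_e0 (A : Finset ℕ) (s b : ℕ → ℕ) (μ : ℕ) : VDecomp (Dc A 0 s b μ) := by
  have h : Dc A 0 s b μ = ∅ := by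
    ext F
    simp only [Dc, Set.mem_setOf_eq, Set.mem_empty_iff_false, iff_false, not_and, not_not]
    intro _
    exact ⟨fun _ => μ, fun r h1 h2 => absurd (le_trans h1 h2) (by omega), le_refl μ,
      fun r h1 h2 => absurd (le_trans h1 (Nat.le_of_succ_le h2)) (by omega)⟩
  rw [h]; exact VDecomp.empty

lemma vdec_e1 (A : Finset ℕ) (s b : ℕ → ℕ) (μ : ℕ) : VDecomp (Dc A 1 s b μ) := by
  classical
  have h : Dc A 1 s b μ = {F | F ⊆ A.filter fun x => x < μ ∨ b 1 < x} := by
    ext F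
    simp only [Dc, Set.mem_setOf_eq]
    constructor
    · rintro ⟨hFA, hnc⟩ x hx
      rw [Finset.mem_filter]
      refine ⟨hFA hx, ?_⟩
      by_contra hcon
      push_neg at hcon
      exact hnc ⟨fun _ => x,
        fun r h1 h2 => by
          have : r = 1 := by omega
          subst this; exact ⟨hx, hcon.2⟩,
        hcon.1, fun r h1 h2 => by omega⟩
    · intro hF
      constructor
      · exact fun x hx => (Finset.mem_filter.mp (hF hx)).1
      · rintro ⟨c, h1, h2, _⟩
        have hc1 := h1 1 le_rfl le_rfl
        have := (Finset.mem_filter.mp (hF hc1.1)).2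
        rcases this with h | h <;> omega
  rw [h]; exact VDecomp.simplex _

lemma vdec_nochain (A : Finset ℕ) (e : ℕ) (s b : ℕ → ℕ) (μ : ℕ)
    (h : ¬ HasChain e s b μ A) : VDecomp (Dc A e s b μ) := by
  have heq : Dc A e s b μ = {F | F ⊆ A} := by
    ext F
    simp only [Dc, Set.mem_setOf_eq, and_iff_left_iff_imp]
    intro hFA hc
    exact h (hasChain_mono hFA hc)
  rw [heq]; exact VDecomp.simplex A

lemma vdec_main (n : ℕ) : ∀ (N : ℕ) (A : Finset ℕ) (e : ℕ) (s b : ℕ → ℕ) (μ : ℕ),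
    A.card ≤ N →
    (∀ r, 1 ≤ r → r + 1 ≤ e → 1 ≤ s r) →
    (∀ r, 1 ≤ r → r + 1 ≤ e → b r ≤ b (r + 1)) →
    (1 ≤ e → b e ≤ n) →
    Finset.Icc μ n ⊆ A →
    VDecomp (Dc A e s b μ) := by
  intro N
  induction N with
  | zero =>
      intro A e s b μ hcard hs hb hbe hA
      rcases Nat.eq_zero_or_pos e with he | he
      · subst he; exact vdec_e0 A s b μ
      · apply vdec_nochain
        rintro ⟨c, h1, -, -⟩
        have hmem := (h1 1 le_rfl he).1
        have : A = ∅ := Finset.card_eq_zero.mp (by omega)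
        rw [this] at hmem
        exact absurd hmem (Finset.notMem_empty _)
  | succ N IH =>
      intro A e s b μ hcard hs hb hbe hA
      obtain he0 | he1 | he2 : e = 0 ∨ e = 1 ∨ 2 ≤ e := by omega
      · subst he0; exact vdec_e0 A s b μ
      · subst he1; exact vdec_e1 A s b μ
      by_cases hchain : HasChain e s b μ A
      case neg => exact vdec_nochain A e s b μ hchain
      obtain ⟨c₀, hc₀1, hc₀2, hc₀3⟩ := hchain
      have hc11 := hc₀1 1 le_rfl (by omega)
      have hμb1 : μ ≤ b 1 := le_trans hc₀2 hc11.2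
      have hbm : ∀ p q, 1 ≤ p → p ≤ q → q ≤ e → b p ≤ b q := by
        intro p q hp hpq hq
        have := chain_grow (s := fun _ => 0) (c := b)
          (fun r h1 h2 => by simpa using hb r h1 h2) p hp q hpq hq
        simpa using this
      have hbn : ∀ r, 1 ≤ r → r ≤ e → b r ≤ n := fun r h1 h2 =>
        le_trans (hbm r e h1 h2 le_rfl) (hbe (by omega))
      have hμn : μ ≤ n := le_trans hμb1 (hbn 1 le_rfl (by omega))
      have hμA : μ ∈ A := hA (Finset.mem_Icc.mpr ⟨le_rfl, hμn⟩)
      have hcard' : (A.erase μ).card ≤ N := by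
        have h1 := Finset.card_erase_of_mem hμA
        have h2 : 0 < A.card := Finset.card_pos.mpr ⟨μ, hμA⟩
        omega
      have hsubA' : ∀ ν, μ + 1 ≤ ν → Finset.Icc ν n ⊆ A.erase μ := by
        intro ν hν x hx
        rw [Finset.mem_Icc] at hx
        exact Finset.mem_erase.mpr ⟨by omega, hA (Finset.mem_Icc.mpr ⟨by omega, hx.2⟩)⟩
      refine VDecomp.step _ μ ?_ ?_ ?_ ?_
      -- hv
      · refine ⟨{μ}, ⟨Finset.singleton_subset_iff.mpr hμA, ?_⟩, Finset.mem_singleton_self μ⟩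
        rintro ⟨c, h1, h2, h3⟩
        have e1 := Finset.mem_singleton.mp (h1 1 le_rfl (by omega)).1
        have e2 := Finset.mem_singleton.mp (h1 2 (by omega) he2).1
        have e3 : c 1 + s 1 ≤ c 2 := h3 1 le_rfl he2
        have e4 := hs 1 le_rfl he2
        omega
      -- hdel
      · have hdel_eq : {F ∈ Dc A e s b μ | μ ∉ F} = Dc (A.erase μ) e s b (μ + 1) := by
          ext F
          simp only [Dc, Set.mem_setOf_eq]
          constructor
          · rintro ⟨⟨hFA, hnc⟩, hμF⟩
            refine ⟨fun x hx => Finset.mem_erase.mpr ⟨fun h => hμF (h ▸ hx), hFA hx⟩, ?_⟩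
            rintro ⟨c, h1, h2, h3⟩
            exact hnc ⟨c, h1, by omega, h3⟩
          · rintro ⟨hFA, hnc⟩
            have hFA' : F ⊆ A := fun x hx => (Finset.mem_erase.mp (hFA hx)).2
            have hμF : μ ∉ F := fun h => (Finset.mem_erase.mp (hFA h)).1 rfl
            refine ⟨⟨hFA', ?_⟩, hμF⟩
            rintro ⟨c, h1, h2, h3⟩
            have hc1 := (h1 1 le_rfl (by omega)).1
            have hne : c 1 ≠ μ := fun h => hμF (h ▸ hc1)
            exact hnc ⟨c, h1, by omega, h3⟩
        rw [hdel_eq]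
        exact IH (A.erase μ) e s b (μ + 1) hcard' hs hb hbe (hsubA' _ le_rfl)
      -- hlink
      · have hs1 : 1 ≤ s 1 := hs 1 le_rfl he2
        have hlink_eq : {F | F ∈ Dc A e s b μ ∧ μ ∉ F ∧ insert μ F ∈ Dc A e s b μ}
            = Dc (A.erase μ) (e - 1) (fun r => s (r + 1)) (fun r => b (r + 1)) (μ + s 1) := by
          ext F
          simp only [Dc, Set.mem_setOf_eq]
          constructor
          · rintro ⟨⟨hFA, _⟩, hμF, _, hins_nc⟩
            refine ⟨fun x hx => Finset.mem_erase.mpr ⟨fun h => hμF (h ▸ hx), hFA hx⟩, ?_⟩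
            rintro ⟨c', h1, h2, h3⟩
            apply hins_nc
            refine ⟨fun r => if r = 1 then μ else c' (r - 1), ?_, ?_, ?_⟩
            · intro r hr hre
              by_cases h : r = 1
              · simp only [if_pos h]
                exact ⟨Finset.mem_insert_self _ _, h ▸ hμb1⟩
              · simp only [if_neg h]
                have hh := h1 (r - 1) (by omega) (by omega)
                have hrw : r - 1 + 1 = r := by omega
                have hh2 : c' (r - 1) ∈ F ∧ c' (r - 1) ≤ b (r - 1 + 1) := hh
                rw [hrw] at hh2
                exact ⟨Finset.mem_insert_of_mem hh2.1, hh2.2⟩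
            · simp
            · intro r hr hre
              by_cases h : r = 1
              · subst h
                simp only [if_pos rfl, if_neg (by omega : ¬ (1 + 1 = 1))]
                simpa using h2
              · simp only [if_neg h, if_neg (by omega : ¬ (r + 1 = 1))]
                have hh := h3 (r - 1) (by omega) (by omega)
                have hrw : r - 1 + 1 = r := by omega
                rw [hrw] at hh
                simpa [hrw] using hh
          · rintro ⟨hFA, hnc'⟩
            have hFA' : F ⊆ A := fun x hx => (Finset.mem_erase.mp (hFA hx)).2
            have hμF : μ ∉ F := fun h => (Finset.mem_erase.mp (hFA h)).1 rfl
            have hnochainF : ¬ HasChain e s b μ F := by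
              rintro ⟨c, h1, h2, h3⟩
              apply hnc'
              refine ⟨fun r => c (r + 1), ?_, ?_, ?_⟩
              · intro r hr hre
                exact h1 (r + 1) (by omega) (by omega)
              · show μ + s 1 ≤ c 2
                have hx : c 1 + s 1 ≤ c 2 := h3 1 le_rfl he2
                omega
              · intro r hr hre
                exact h3 (r + 1) (by omega) (by omega)
            refine ⟨⟨hFA', hnochainF⟩, hμF, ?_, ?_⟩
            · intro x hx
              rcases Finset.mem_insert.mp hx with h | h
              · exact h ▸ hμA
              · exact hFA' h
            · rintro ⟨c, h1, h2, h3⟩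
              by_cases hc1 : c 1 = μ
              · apply hnc'
                refine ⟨fun r => c (r + 1), ?_, ?_, ?_⟩
                · intro r hr hre
                  have hh := h1 (r + 1) (by omega) (by omega)
                  have hgt : μ < c (r + 1) := by
                    have ha := chain_lt hs h3 (p := 2) (q := r + 1) (by omega) (by omega) (by omega)
                    have hx : c 1 + s 1 ≤ c 2 := h3 1 le_rfl he2
                    omega
                  refine ⟨?_, hh.2⟩
                  rcases Finset.mem_insert.mp hh.1 with h | h
                  · omega
                  · exact h
                · show μ + s 1 ≤ c 2
                  have hx : c 1 + s 1 ≤ c 2 := h3 1 le_rfl he2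
                  omega
                · intro r hr hre
                  exact h3 (r + 1) (by omega) (by omega)
              · apply hnochainF
                refine ⟨c, ?_, h2, h3⟩
                intro r hr hre
                have hh := h1 r hr hre
                have hne : c r ≠ μ := by
                  rcases Nat.eq_or_lt_of_le hr with h | h
                  · rw [← h]; exact fun hcon => hc1 hcon
                  · have := chain_lt hs h3 (p := 1) (q := r) le_rfl (by omega) hre
                    omega
                refine ⟨?_, hh.2⟩
                rcases Finset.mem_insert.mp hh.1 with h | h
                · exact absurd h hne
                · exact h
        rw [hlink_eq]
        refine IH (A.erase μ) (e - 1) _ _ (μ + s 1) hcard' ?_ ?_ ?_ (hsubA' _ (by omega))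
        · intro r h1 h2; exact hs (r + 1) (by omega) (by omega)
        · intro r h1 h2; exact hb (r + 1) (by omega) (by omega)
        · intro h
          have hrw : e - 1 + 1 = e := by omega
          calc b (e - 1 + 1) = b e := by rw [hrw]
          _ ≤ n := hbe (by omega)
      -- hfac
      · intro F hFf
        obtain ⟨⟨⟨hFA, hFnc⟩, hμF⟩, hmax⟩ := hFf
        have hkey : HasChain e s b μ (insert μ F) := by
          by_contra hins
          have hlow : ∀ x ∈ A, x < μ → x ∈ F := by
            intro x hxA hxμ
            by_contra hxF
            have hsub : insert x F ∈ {F ∈ Dc A e s b μ | μ ∉ F} := by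
              refine ⟨⟨?_, ?_⟩, ?_⟩
              · intro y hy
                rcases Finset.mem_insert.mp hy with h | h
                · exact h ▸ hxA
                · exact hFA h
              · rintro ⟨c, h1, h2, h3⟩
                apply hFnc
                refine ⟨c, ?_, h2, h3⟩
                intro r hr hre
                have hh := h1 r hr hre
                have hge : μ ≤ c r := by
                  have := chain_lt hs h3 (p := 1) (q := r) le_rfl hr hre
                  omega
                refine ⟨?_, hh.2⟩
                rcases Finset.mem_insert.mp hh.1 with h | h
                · omega
                · exact h
              · intro h
                rcases Finset.mem_insert.mp h with h | h
                · omega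
                · exact hμF h
            have := hmax _ hsub (Finset.subset_insert x F)
            exact hxF (this ▸ Finset.mem_insert_self x F)
          classical
          set W := A.filter (fun x => x ∉ F ∧ μ < x) with hWdef
          have hWne : W.Nonempty := by
            by_contra hWe
            have hAsub : A ⊆ insert μ F := by
              intro x hxA
              rcases lt_trichotomy x μ with h | h | h
              · exact Finset.mem_insert_of_mem (hlow x hxA h)
              · exact h ▸ Finset.mem_insert_self μ F
              · by_contra hxF'
                have hxF : x ∉ F := fun hf => hxF' (Finset.mem_insert_of_mem hf)
                exact hWe ⟨x, Finset.mem_filter.mpr ⟨hxA, hxF, h⟩⟩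
            exact hins ⟨c₀, fun r hr hre =>
              ⟨hAsub (hc₀1 r hr hre).1, (hc₀1 r hr hre).2⟩, hc₀2, hc₀3⟩
          set w := W.min' hWne with hwdef
          have hwW := Finset.mem_filter.mp (W.min'_mem hWne)
          obtain ⟨hwA, hwF, hμw⟩ := hwW
          have hwmin : ∀ x, μ < x → x < w → x ≤ n → x ∈ F := by
            intro x h1 h2 h3
            by_contra hxF
            have hxW : x ∈ W := Finset.mem_filter.mpr
              ⟨hA (Finset.mem_Icc.mpr ⟨by omega, h3⟩), hxF, h1⟩
            have := W.min'_le x hxW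
            omega
          have hchainw : HasChain e s b μ (insert w F) := by
            by_contra hncw
            have hmem : insert w F ∈ {F ∈ Dc A e s b μ | μ ∉ F} := by
              refine ⟨⟨?_, hncw⟩, ?_⟩
              · intro y hy
                rcases Finset.mem_insert.mp hy with h | h
                · exact h ▸ hwA
                · exact hFA h
              · intro h
                rcases Finset.mem_insert.mp h with h | h
                · omega
                · exact hμF h
            have := hmax _ hmem (Finset.subset_insert w F)
            exact hwF (this ▸ Finset.mem_insert_self w F)
          obtain ⟨c, h1, h2, h3⟩ := hchainw
          have hex : ∃ ρ, 1 ≤ ρ ∧ ρ ≤ e ∧ c ρ = w := by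
            by_contra hno
            push_neg at hno
            apply hFnc
            refine ⟨c, fun r hr hre => ?_, h2, h3⟩
            have hh := h1 r hr hre
            refine ⟨?_, hh.2⟩
            rcases Finset.mem_insert.mp hh.1 with h | h
            · exact absurd h (hno r hr hre)
            · exact h
          obtain ⟨ρ, hρ1, hρe, hcρ⟩ := hex
          -- basic facts about the chain
          have hckμ : ∀ k, 1 ≤ k → k ≤ e → μ < c k := by
            intro k hk1 hke
            have hh := h1 k hk1 hke
            have hge : μ ≤ c k := by
              have := chain_lt hs h3 (p := 1) (q := k) le_rfl hk1 hke
              omega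
            rcases Finset.mem_insert.mp hh.1 with h | h
            · omega
            · rcases Nat.eq_or_lt_of_le hge with h' | h'
              · exact absurd (h' ▸ h) hμF
              · exact h'
          have hgrow : ∀ k, 1 ≤ k → k ≤ ρ → c k + ∑ i ∈ Finset.Ico k ρ, s i ≤ w :=
            fun k hk1 hkρ => hcρ ▸ chain_grow h3 k hk1 ρ hkρ hρe
          set T : ℕ → ℕ := fun k => w - 1 - ∑ i ∈ Finset.Ico k ρ, s i with hTdef
          have hTk : ∀ k, 1 ≤ k → k ≤ ρ → μ ≤ T k ∧ T k < w := by
            intro k hk1 hkρ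
            have hg := hgrow k hk1 hkρ
            have hck := hckμ k hk1 (le_trans hkρ hρe)
            constructor
            · simp only [hTdef]; omega
            · simp only [hTdef]; omega
          apply hins
          refine ⟨fun k => if k ≤ ρ then min (c k) (T k) else c k, ?_, ?_, ?_⟩
          · intro r hr hre
            by_cases hrρ : r ≤ ρ
            · simp only [if_pos hrρ]
              have hh := h1 r hr hre
              have hT := hTk r hr hrρ
              constructor
              · rcases le_total (c r) (T r) with h | h
                · rw [min_eq_left h]
                  have hcw : c r < w := by omega
                  rcases Finset.mem_insert.mp hh.1 with h' | h'
                  · omega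
                  · exact Finset.mem_insert_of_mem h'
                · rw [min_eq_right h]
                  rcases Nat.eq_or_lt_of_le hT.1 with h' | h'
                  · exact h' ▸ Finset.mem_insert_self μ F
                  · refine Finset.mem_insert_of_mem (hwmin (T r) h' hT.2 ?_)
                    have : c r ≤ b r := hh.2
                    have : b r ≤ n := hbn r hr hre
                    omega
              · exact le_trans (min_le_left _ _) hh.2
            · simp only [if_neg hrρ]
              have hh := h1 r hr hre
              have hcw : w < c r := by
                have := chain_lt hs h3 (p := ρ) (q := r) hρ1 (by omega) hre
                omega
              refine ⟨?_, hh.2⟩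
              rcases Finset.mem_insert.mp hh.1 with h' | h'
              · omega
              · exact Finset.mem_insert_of_mem h'
          · simp only [if_pos hρ1]
            have hT := hTk 1 le_rfl hρ1
            have := hckμ 1 le_rfl (by omega)
            omega
          · intro r hr hre
            by_cases h1ρ : r + 1 ≤ ρ
            · simp only [if_pos (by omega : r ≤ ρ), if_pos h1ρ]
              have e1 : c r + s r ≤ c (r + 1) := h3 r hr hre
              have hsplit : ∑ i ∈ Finset.Ico r ρ, s i
                  = s r + ∑ i ∈ Finset.Ico (r + 1) ρ, s i :=
                Finset.sum_eq_sum_Ico_succ_bot (by omega) s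
              have hg := hgrow r hr (by omega)
              have hck := hckμ r hr (by omega)
              refine le_min ?_ ?_
              · exact le_trans (Nat.add_le_add_right (min_le_left _ _) _) e1
              · refine le_trans (Nat.add_le_add_right (min_le_right _ _) _) ?_
                simp only [hTdef]
                omega
            · by_cases hrρ : r ≤ ρ
              · have hρr : ρ = r := by omega
                simp only [if_pos hrρ, if_neg h1ρ]
                have e1 : c r + s r ≤ c (r + 1) := h3 r hr hre
                have hmin : min (c r) (T r) ≤ T r := min_le_right _ _
                have hTr : T r = w - 1 := by
                  simp only [hTdef, hρr, Finset.Ico_self, Finset.sum_empty, Nat.sub_zero]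
                have hcr : c r = w := hρr ▸ hcρ
                omega
              · simp only [if_neg hrρ, if_neg h1ρ]
                exact h3 r hr hre
        -- conclude
        refine ⟨⟨hFA, hFnc⟩, ?_⟩
        intro G hG hFG
        by_cases hμG : μ ∈ G
        · exfalso
          obtain ⟨hGA, hGnc⟩ := hG
          exact hGnc (hasChain_mono (Finset.insert_subset hμG hFG) hkey)
        · exact hmax G ⟨hG, hμG⟩ hFG


lemma prod_xv_eq (K : Type*) [Field K] (n : ℕ) [NeZero n] (S : Finset ℕ) (g : ℕ → ℕ) :
    ∏ p ∈ S, xv K n (g p) =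
      MvPolynomial.monomial (∑ p ∈ S, Finsupp.single (Fin.ofNat n (g p - 1 : ℕ)) 1) (1 : K) := by
  classical
  induction S using Finset.induction with
  | empty => simp
  | @insert a s hx ih =>
      rw [Finset.prod_insert hx, Finset.sum_insert hx, ih,
        show xv K n (g a)
          = MvPolynomial.monomial (Finsupp.single (Fin.ofNat n (g a - 1 : ℕ)) 1) (1 : K) from rfl,
        MvPolynomial.monomial_mul, one_mul]

lemma mem_tBorel_iff (K : Type*) [Field K] (n d : ℕ) [NeZero n] (t j : ℕ → ℕ)
    (hd : 1 ≤ d) (ht : ∀ r, 1 ≤ r → r + 1 ≤ d → 1 ≤ t r)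
    (hjn : ∀ r, 1 ≤ r → r ≤ d → j r ≤ n)
    (F : Finset ℕ) (hF : F ⊆ Finset.Icc 1 n) :
    (∏ p ∈ F, xv K n p) ∈ tBorel K n d t j ↔ HasChain d t j 1 F := by
  classical
  have hn : 1 ≤ n := Nat.one_le_iff_ne_zero.mpr (NeZero.ne n)
  constructor
  · intro hmem
    rw [tBorel] at hmem
    have himg : (fun i => monOf K n d i) '' spreadIdx d t j
        = (fun s => MvPolynomial.monomial s (1 : K)) ''
          ((fun i => ∑ r ∈ Finset.Icc 1 d,
            Finsupp.single (Fin.ofNat n (i r - 1 : ℕ)) 1) '' spreadIdx d t j) := by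
      rw [Set.image_image]
      apply Set.image_congr
      intro i _
      exact prod_xv_eq K n (Finset.Icc 1 d) i
    rw [himg, MvPolynomial.mem_ideal_span_monomial_image] at hmem
    set m := ∑ p ∈ F, Finsupp.single (Fin.ofNat n (p - 1 : ℕ)) (1 : ℕ) with hm
    have hsupp : m ∈ (∏ p ∈ F, xv K n p).support := by
      rw [prod_xv_eq K n F (fun p => p), MvPolynomial.support_monomial, if_neg one_ne_zero]
      exact Finset.mem_singleton_self m
    obtain ⟨si, hsi, hle⟩ := hmem m hsupp
    obtain ⟨i, hi, rfl⟩ := hsi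
    obtain ⟨hi1, hi2⟩ := hi
    refine ⟨i, ?_, (hi1 1 le_rfl hd).1, hi2⟩
    intro r hr hre
    refine ⟨?_, (hi1 r hr hre).2⟩
    set v : Fin n := (Fin.ofNat n (i r - 1 : ℕ)) with hv
    have hterm : (1 : ℕ) ≤ (∑ r' ∈ Finset.Icc 1 d,
        Finsupp.single (Fin.ofNat n (i r' - 1 : ℕ)) (1 : ℕ)) v := by
      rw [Finsupp.finset_sum_apply]
      calc (1 : ℕ) = (Finsupp.single (Fin.ofNat n (i r - 1 : ℕ)) (1 : ℕ)) v :=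
            (Finsupp.single_eq_same).symm
      _ ≤ _ := Finset.single_le_sum
            (f := fun r' => (Finsupp.single (Fin.ofNat n (i r' - 1 : ℕ)) (1 : ℕ)) v)
            (fun _ _ => Nat.zero_le _) (Finset.mem_Icc.mpr ⟨hr, hre⟩)
    have hmv : 1 ≤ m v := le_trans hterm (Finsupp.le_def.mp hle v)
    have hex : ∃ p ∈ F, (Fin.ofNat n (p - 1 : ℕ)) = v := by
      by_contra hno
      push_neg at hno
      have hz : m v = 0 := by
        rw [hm, Finsupp.finset_sum_apply]
        apply Finset.sum_eq_zero
        intro p hp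
        rw [Finsupp.single_apply, if_neg (hno p hp)]
      omega
    obtain ⟨p, hpF, hpv⟩ := hex
    have hp := Finset.mem_Icc.mp (hF hpF)
    have hir1 : 1 ≤ i r := (hi1 r hr hre).1
    have hirn : i r ≤ n := le_trans (hi1 r hr hre).2 (hjn r hr hre)
    have hval := congrArg Fin.val hpv
    rw [hv, Fin.val_ofNat, Fin.val_ofNat,
      Nat.mod_eq_of_lt (by omega), Nat.mod_eq_of_lt (by omega)] at hval
    have hpe : p = i r := by omega
    exact hpe ▸ hpF
  · rintro ⟨c, h1, h2, h3⟩
    have hinj : ∀ x ∈ Finset.Icc 1 d, ∀ y ∈ Finset.Icc 1 d, c x = c y → x = y := by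
      intro x hx y hy hxy
      rw [Finset.mem_Icc] at hx hy
      by_contra hne
      rcases Nat.lt_or_ge x y with h | h
      · have := chain_lt ht h3 hx.1 (le_of_lt h) hy.2
        omega
      · have hyx : y < x := by omega
        have := chain_lt ht h3 hy.1 (le_of_lt hyx) hx.2
        omega
    have hsub : (Finset.Icc 1 d).image c ⊆ F := by
      intro x hx
      obtain ⟨r, hr, rfl⟩ := Finset.mem_image.mp hx
      rw [Finset.mem_Icc] at hr
      exact (h1 r hr.1 hr.2).1
    have hgen : monOf K n d c ∈ tBorel K n d t j := by
      apply Ideal.subset_span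
      refine ⟨c, ⟨?_, h3⟩, rfl⟩
      intro r hr hre
      have hm1 := (h1 r hr hre).1
      have hm2 := Finset.mem_Icc.mp (hF hm1)
      exact ⟨hm2.1, (h1 r hr hre).2⟩
    have h4 : ∏ p ∈ (Finset.Icc 1 d).image c, xv K n p = monOf K n d c :=
      Finset.prod_image hinj
    have hfact : ∏ p ∈ F, xv K n p
        = (∏ p ∈ F \ (Finset.Icc 1 d).image c, xv K n p) * monOf K n d c := by
      rw [← h4, Finset.prod_sdiff hsub]
    rw [hfact]
    exact Ideal.mul_mem_left _ _ hgen

/-- **Corollary.** The simplicial complex `Δ` on `[n]` whose Stanley–Reisner ideal is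
`B_t(u)` — the faces are the `F ⊆ [n]` with `∏_{p ∈ F} x_p ∉ B_t(u)` — is vertex
decomposable. -/
theorem stmt7 (K : Type*) [Field K] (n d : ℕ) [NeZero n] (t j : ℕ → ℕ)
    (hd : 2 ≤ d) (ht : ∀ k, 1 ≤ k → k ≤ d - 1 → 1 ≤ t k)
    (hj1 : 1 ≤ j 1) (hjmono : ∀ p q, 1 ≤ p → p < q → q ≤ d → j p < j q)
    (hjd : j d = n) (hspread : ∀ k, 1 ≤ k → k ≤ d - 1 → j k + t k ≤ j (k + 1)) :
    VDecomp {F : Finset ℕ | F ⊆ Finset.Icc 1 n ∧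
      (∏ p ∈ F, xv K n p) ∉ tBorel K n d t j} := by
  have hd1 : 1 ≤ d := by omega
  have ht' : ∀ r, 1 ≤ r → r + 1 ≤ d → 1 ≤ t r := fun r h1 h2 => ht r h1 (by omega)
  have hjn : ∀ r, 1 ≤ r → r ≤ d → j r ≤ n := by
    intro r h1 h2
    rcases Nat.eq_or_lt_of_le h2 with h | h
    · rw [h, hjd]
    · rw [← hjd]
      exact le_of_lt (hjmono r d h1 h le_rfl)
  have hset : {F : Finset ℕ | F ⊆ Finset.Icc 1 n ∧
      (∏ p ∈ F, xv K n p) ∉ tBorel K n d t j} = Dc (Finset.Icc 1 n) d t j 1 := by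
    ext F
    simp only [Dc, Set.mem_setOf_eq]
    constructor
    · rintro ⟨hh1, hh2⟩
      exact ⟨hh1, fun hc => hh2 ((mem_tBorel_iff K n d t j hd1 ht' hjn F hh1).mpr hc)⟩
    · rintro ⟨hh1, hh2⟩
      exact ⟨hh1, fun hmm => hh2 ((mem_tBorel_iff K n d t j hd1 ht' hjn F hh1).mp hmm)⟩
  rw [hset]
  refine vdec_main n (Finset.Icc 1 n).card (Finset.Icc 1 n) d t j 1 le_rfl ht' ?_ ?_
    subset_rfl
  · intro r h1 h2
    exact le_of_lt (hjmono r (r + 1) h1 (by omega) h2)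
  · intro _
    exact le_of_eq hjd
end

section
/- Let J ⊆ S be a squarefree monomial ideal and let w in S be a squarefree monomial such that no variable dividing w divides any minimal monomial generator of J, and set I = wJ (a squarefree monomial ideal). Then I^(k) = I^k for all integers k >= 1 if and only if J^(k) = J^k for all integers k >= 1. -/
open Finset MvPolynomial

namespace Stmt9Aux
open Finset MvPolynomial Pointwise

variable {K : Type*} [Field K] {σ : Type*}

/-- The monomial ideal with (monomial) generators indexed by `T`. -/
noncomputable def mIdl (K : Type*) [Field K] {σ : Type*} (T : Set (σ →₀ ℕ)) :
    Ideal (MvPolynomial σ K) :=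
  Ideal.span ((fun d => monomial d (1 : K)) '' T)

lemma mem_mIdl {T : Set (σ →₀ ℕ)} {f : MvPolynomial σ K} :
    f ∈ mIdl K T ↔ ∀ m ∈ f.support, ∃ d ∈ T, d ≤ m :=
  MvPolynomial.mem_ideal_span_monomial_image

lemma prod_X_eq (A : Finset σ) :
    (∏ a ∈ A, (X a : MvPolynomial σ K)) = monomial (∑ a ∈ A, Finsupp.single a 1) 1 := by
  classical
  induction A using Finset.induction_on with
  | empty => simp [monomial_zero']
  | insert _ _ h ih =>
      rw [Finset.prod_insert h, Finset.sum_insert h, ih, X, monomial_mul, one_mul]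

lemma indicator_apply [DecidableEq σ] (A : Finset σ) (i : σ) :
    (∑ a ∈ A, Finsupp.single a (1 : ℕ)) i = if i ∈ A then 1 else 0 := by
  rw [Finset.sum_apply']
  simp [Finsupp.single_apply]

/-- The monomial prime `(X a : a ∈ C)`. -/
noncomputable def spanX (K : Type*) [Field K] {σ : Type*} (C : Set σ) :
    Ideal (MvPolynomial σ K) :=
  Ideal.span (X '' C)

lemma spanX_eq_mIdl (C : Set σ) :
    spanX K C = mIdl K ((fun a => Finsupp.single a 1) '' C) := by
  unfold spanX mIdl
  rw [Set.image_image]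
  rfl

lemma mem_spanX_X {C : Set σ} {a : σ} : (X a : MvPolynomial σ K) ∈ spanX K C ↔ a ∈ C := by
  constructor
  · intro h
    rw [spanX, MvPolynomial.mem_ideal_span_X_image] at h
    obtain ⟨i, hi, hne⟩ := h (Finsupp.single a 1) (by simp [support_X])
    rcases eq_or_ne a i with rfl | hia
    · exact hi
    · simp [Finsupp.single_apply, hia] at hne
  · intro h
    exact Ideal.subset_span ⟨a, h, rfl⟩

lemma coeff_restrict (C : Set σ) [DecidablePred (· ∈ C)] (f : MvPolynomial σ K)
    {m : σ →₀ ℕ} (hm : ∀ a ∈ C, m a = 0) :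
    coeff m (aeval (fun a => if a ∈ C then 0 else X a) f) = coeff m f := by
  classical
  conv_lhs => rw [f.as_sum]
  rw [map_sum]
  have hterm : ∀ d : σ →₀ ℕ,
      (aeval (fun a => if a ∈ C then 0 else X a) (monomial d (coeff d f)) : MvPolynomial σ K)
        = if ∀ a ∈ C, d a = 0 then monomial d (coeff d f) else 0 := by
    intro d
    rw [aeval_monomial]
    by_cases hd : ∀ a ∈ C, d a = 0
    · rw [if_pos hd]
      have : (d.prod fun i k => (if i ∈ C then 0 else X i : MvPolynomial σ K) ^ k)
          = d.prod fun i k => (X i : MvPolynomial σ K) ^ k := by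
        apply Finsupp.prod_congr
        intro i hi
        have : i ∉ C := fun hiC => (Finsupp.mem_support_iff.mp hi) (hd i hiC)
        rw [if_neg this]
      rw [this, MvPolynomial.algebraMap_eq, ← monomial_eq]
    · rw [if_neg hd]
      push_neg at hd
      obtain ⟨a, haC, hda⟩ := hd
      have ha : a ∈ d.support := Finsupp.mem_support_iff.mpr hda
      rw [Finsupp.prod, Finset.prod_eq_zero ha (by rw [if_pos haC, zero_pow hda]), mul_zero]
  rw [MvPolynomial.coeff_sum, Finset.sum_congr rfl fun d _ => congrArg (coeff m) (hterm d)]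
  by_cases hmf : m ∈ f.support
  · rw [Finset.sum_eq_single m]
    · rw [if_pos hm, coeff_monomial, if_pos rfl]
    · intro d _ hdm
      by_cases h : ∀ a ∈ C, d a = 0
      · rw [if_pos h, coeff_monomial, if_neg hdm]
      · rw [if_neg h, coeff_zero]
    · intro h; exact absurd hmf h
  · rw [Finset.sum_eq_zero, (mem_support_iff.not.mp hmf |> not_not.mp)]
    intro d hd
    by_cases h : ∀ a ∈ C, d a = 0
    · rw [if_pos h, coeff_monomial, if_neg (fun he : d = m => hmf (he ▸ hd))]
    · rw [if_neg h, coeff_zero]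

lemma isPrime_spanX (C : Set σ) : (spanX K C).IsPrime := by
  classical
  have key : spanX K C = RingHom.ker
      ((aeval (fun a => if a ∈ C then 0 else X a) :
        MvPolynomial σ K →ₐ[K] MvPolynomial σ K) : MvPolynomial σ K →+* MvPolynomial σ K) := by
    apply le_antisymm
    · rw [spanX, Ideal.span_le]
      rintro _ ⟨a, haC, rfl⟩
      simp [RingHom.mem_ker, haC]
    · intro f hf
      rw [RingHom.mem_ker] at hf
      rw [spanX, MvPolynomial.mem_ideal_span_X_image]
      by_contra hnot
      push_neg at hnot
      obtain ⟨m, hmf, hm⟩ := hnot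
      have := coeff_restrict C f hm
      rw [show (aeval (fun a => if a ∈ C then 0 else X a) f : MvPolynomial σ K) = 0 from hf,
        coeff_zero] at this
      exact (mem_support_iff.mp hmf) this.symm
  rw [key]
  exact RingHom.ker_isPrime _

lemma mem_of_mul_monomial_mem {T : Set (σ →₀ ℕ)} {e : σ →₀ ℕ}
    (hTe : ∀ d ∈ T, ∀ i, e i ≠ 0 → d i = 0) {f : MvPolynomial σ K}
    (h : f * monomial e 1 ∈ mIdl K T) : f ∈ mIdl K T := by
  rw [mem_mIdl] at h ⊢
  intro m hm
  have hsupp : m + e ∈ (f * monomial e 1).support := by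
    rw [mem_support_iff, coeff_mul_monomial, mul_one]
    exact mem_support_iff.mp hm
  obtain ⟨d, hdT, hle⟩ := h _ hsupp
  refine ⟨d, hdT, Finsupp.le_def.mpr fun i => ?_⟩
  by_cases he : e i = 0
  · have := Finsupp.le_def.mp hle i
    simpa [he] using this
  · simp [hTe d hdT i he]

lemma mIdl_mul (T T' : Set (σ →₀ ℕ)) : mIdl K T * mIdl K T' = mIdl K (T + T') := by
  unfold mIdl
  rw [Ideal.span_mul_span']
  congr 1
  rw [← Set.image2_mul, ← Set.image2_add, Set.image2_image_left, Set.image2_image_right,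
    Set.image_image2]
  apply Set.image2_congr
  intro a _ b _
  rw [monomial_mul, one_mul]

/-- The `k`-fold (pointwise) sumset. -/
def sumPow (T : Set (σ →₀ ℕ)) : ℕ → Set (σ →₀ ℕ)
  | 0 => {0}
  | k + 1 => T + sumPow T k

lemma mIdl_pow (T : Set (σ →₀ ℕ)) (k : ℕ) : mIdl K T ^ k = mIdl K (sumPow T k) := by
  induction k with
  | zero =>
      rw [pow_zero, sumPow]
      unfold mIdl
      rw [Set.image_singleton, monomial_zero', C_1, Ideal.span_singleton_one]
      exact Ideal.one_eq_top
  | succ k ih => rw [pow_succ, ih, mIdl_mul, sumPow]; rw [add_comm T (sumPow T k)]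

lemma sumPow_zeros {T : Set (σ →₀ ℕ)} {P : σ → Prop} (hT : ∀ d ∈ T, ∀ i, P i → d i = 0)
    (k : ℕ) : ∀ d ∈ sumPow T k, ∀ i, P i → d i = 0 := by
  induction k with
  | zero => rintro d hd i hi; simp only [sumPow, Set.mem_singleton_iff] at hd; simp [hd]
  | succ k ih =>
      rintro d hd i hi
      simp only [sumPow] at hd
      obtain ⟨a, ha, b, hb, rfl⟩ := hd
      simp [hT a ha i hi, ih b hb i hi]

lemma span_singleton_inf_eq_mul {R : Type*} [CommRing R] (c : R) (Q : Ideal R)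
    (hc : ∀ f, f * c ∈ Q → f ∈ Q) : Ideal.span {c} ⊓ Q = Ideal.span {c} * Q := by
  apply le_antisymm
  · rintro x ⟨hx1, hx2⟩
    obtain ⟨y, rfl⟩ := Ideal.mem_span_singleton'.mp hx1
    exact Ideal.mem_span_singleton_mul.mpr ⟨y, hc y hx2, mul_comm c y⟩
  · exact le_inf Ideal.mul_le_left Ideal.mul_le_right

lemma span_singleton_mul_cancel {R : Type*} [CommRing R] [IsDomain R] {c : R} (hc : c ≠ 0)
    {A B : Ideal R} (h : Ideal.span {c} * A = Ideal.span {c} * B) : A = B := by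
  have key : ∀ A B : Ideal R, Ideal.span {c} * A = Ideal.span {c} * B → A ≤ B := by
    intro A B hAB a ha
    have : c * a ∈ Ideal.span {c} * B := by
      rw [← hAB]; exact Ideal.mem_span_singleton_mul.mpr ⟨a, ha, rfl⟩
    obtain ⟨z, hz, hza⟩ := Ideal.mem_span_singleton_mul.mp this
    rwa [← mul_left_cancel₀ hc hza]
  exact le_antisymm (key A B h) (key B A h.symm)

/-- Every minimal prime of a squarefree monomial ideal whose generators avoid the
variables in `B` is generated by variables not in `B`. -/
lemma minimalPrime_structure {𝒜 : Set (Finset σ)} {B : Finset σ}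
    (hdisj : ∀ A ∈ 𝒜, Disjoint B A) {J : Ideal (MvPolynomial σ K)}
    (hJ : J = Ideal.span ((fun A => ∏ a ∈ A, (X a : MvPolynomial σ K)) '' 𝒜))
    {P : Ideal (MvPolynomial σ K)} (hP : P ∈ J.minimalPrimes) :
    ∃ C : Set σ, P = spanX K C ∧ ∀ b ∈ B, b ∉ C := by
  have hPp : P.IsPrime := hP.1.1
  have hJP : J ≤ P := hP.1.2
  set C : Set σ := {a | (X a : MvPolynomial σ K) ∈ P ∧ a ∉ B} with hC
  have hQP : spanX K C ≤ P := by
    rw [spanX, Ideal.span_le]; rintro _ ⟨a, ha, rfl⟩; exact ha.1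
  have hJQ : J ≤ spanX K C := by
    rw [hJ, Ideal.span_le]
    rintro _ ⟨A, hA, rfl⟩
    have hprod : (∏ a ∈ A, (X a : MvPolynomial σ K)) ∈ P :=
      hJP (hJ ▸ Ideal.subset_span ⟨A, hA, rfl⟩)
    obtain ⟨a, haA, haP⟩ := (Ideal.IsPrime.prod_mem_iff).mp hprod
    have haB : a ∉ B := fun hb => (Finset.disjoint_left.mp (hdisj A hA) hb) haA
    have haC : a ∈ C := ⟨haP, haB⟩
    classical
    show (∏ a ∈ A, (X a : MvPolynomial σ K)) ∈ (spanX K C : Set (MvPolynomial σ K))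
    rw [← Finset.mul_prod_erase A _ haA]
    exact Ideal.mul_mem_right _ _ (Ideal.subset_span ⟨a, haC, rfl⟩)
  have hle : P ≤ spanX K C := hP.2 ⟨isPrime_spanX C, hJQ⟩ hQP
  exact ⟨C, le_antisymm hle hQP, fun b hb hbC => hbC.2 hb⟩

lemma span_X_singleton (b : σ) :
    Ideal.span {(X b : MvPolynomial σ K)} = spanX K ({b} : Set σ) := by
  rw [spanX, Set.image_singleton]

/-- Characterization of the minimal primes of `I = wJ`. -/
lemma minimalPrimes_I {𝒜 : Set (Finset σ)} (hne : 𝒜.Nonempty) {B : Finset σ}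
    (hdisj : ∀ A ∈ 𝒜, Disjoint B A) {J I : Ideal (MvPolynomial σ K)}
    (hJ : J = Ideal.span ((fun A => ∏ a ∈ A, (X a : MvPolynomial σ K)) '' 𝒜))
    (hI : I = Ideal.span {(∏ b ∈ B, X b : MvPolynomial σ K)} * J) :
    I.minimalPrimes
      = (fun b => Ideal.span {(X b : MvPolynomial σ K)}) '' (↑B : Set σ)
        ∪ J.minimalPrimes := by
  have hIJ : I ≤ J := hI ▸ Ideal.mul_le_right
  have hIw : I ≤ Ideal.span {(∏ b ∈ B, X b : MvPolynomial σ K)} := hI ▸ Ideal.mul_le_left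
  have hwXb : ∀ b ∈ B, (∏ c ∈ B, X c : MvPolynomial σ K) ∈ Ideal.span {(X b : MvPolynomial σ K)} :=
    fun b hb => Ideal.mem_span_singleton.mpr (Finset.dvd_prod_of_mem _ hb)
  have hXbmove : ∀ (a b : σ), (X a : MvPolynomial σ K) ∈ Ideal.span {(X b : MvPolynomial σ K)} → a = b := by
    intro a b h
    rw [span_X_singleton, mem_spanX_X] at h
    exact h
  ext P
  constructor
  · intro hP
    have hPp : P.IsPrime := hP.1.1
    have hmul : Ideal.span {(∏ b ∈ B, X b : MvPolynomial σ K)} * J ≤ P := hI ▸ hP.1.2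
    rcases hPp.mul_le.mp hmul with hw | hJle
    · have hwP : (∏ b ∈ B, X b : MvPolynomial σ K) ∈ P := hw (Ideal.subset_span rfl)
      obtain ⟨b, hb, hXbP⟩ := (Ideal.IsPrime.prod_mem_iff).mp hwP
      have hQp : (Ideal.span {(X b : MvPolynomial σ K)}).IsPrime := by
        rw [span_X_singleton]; exact isPrime_spanX _
      have hIQ : I ≤ Ideal.span {(X b : MvPolynomial σ K)} :=
        hIw.trans ((Ideal.span_le).mpr (Set.singleton_subset_iff.mpr (hwXb b hb)))
      have hQP : Ideal.span {(X b : MvPolynomial σ K)} ≤ P :=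
        (Ideal.span_le).mpr (Set.singleton_subset_iff.mpr hXbP)
      have : P = Ideal.span {(X b : MvPolynomial σ K)} :=
        le_antisymm (hP.2 ⟨hQp, hIQ⟩ hQP) hQP
      exact Or.inl ⟨b, hb, this.symm⟩
    · haveI := hPp
      obtain ⟨Q, hQmin, hQP⟩ := Ideal.exists_minimalPrimes_le hJle
      have : P = Q := le_antisymm (hP.2 ⟨hQmin.1.1, hIJ.trans hQmin.1.2⟩ hQP) hQP
      exact Or.inr (this ▸ hQmin)
  · rintro (⟨b, hb, rfl⟩ | hPJ)
    · have hbp : (Ideal.span {(X b : MvPolynomial σ K)}).IsPrime := by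
        rw [span_X_singleton]; exact isPrime_spanX _
      refine ⟨⟨hbp, hIw.trans ((Ideal.span_le).mpr
        (Set.singleton_subset_iff.mpr (hwXb b hb)))⟩, ?_⟩
      rintro Q ⟨hQp, hIQ⟩ hQle
      have hmul : Ideal.span {(∏ c ∈ B, X c : MvPolynomial σ K)} * J ≤ Q := hI ▸ hIQ
      rcases hQp.mul_le.mp hmul with hw | hJle
      · have hwQ : (∏ c ∈ B, X c : MvPolynomial σ K) ∈ Q := hw (Ideal.subset_span rfl)
        obtain ⟨c, hc, hXcQ⟩ := (Ideal.IsPrime.prod_mem_iff).mp hwQ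
        have : c = b := hXbmove c b (hQle hXcQ)
        exact (Ideal.span_le).mpr (Set.singleton_subset_iff.mpr (this ▸ hXcQ))
      · obtain ⟨A, hA⟩ := hne
        have hmA : (∏ a ∈ A, (X a : MvPolynomial σ K)) ∈ Q :=
          hJle (hJ ▸ Ideal.subset_span ⟨A, hA, rfl⟩)
        obtain ⟨a, haA, haQ⟩ := (Ideal.IsPrime.prod_mem_iff).mp hmA
        have hab : a = b := hXbmove a b (hQle haQ)
        exact absurd haA (Finset.disjoint_left.mp (hdisj A hA) (hab ▸ hb))
    · obtain ⟨C, hPC, hCB⟩ := minimalPrime_structure hdisj hJ hPJ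
      refine ⟨⟨hPJ.1.1, hIJ.trans hPJ.1.2⟩, ?_⟩
      rintro Q ⟨hQp, hIQ⟩ hQle
      have hmul : Ideal.span {(∏ c ∈ B, X c : MvPolynomial σ K)} * J ≤ Q := hI ▸ hIQ
      rcases hQp.mul_le.mp hmul with hw | hJle
      · have hwP : (∏ c ∈ B, X c : MvPolynomial σ K) ∈ P :=
          hQle (hw (Ideal.subset_span rfl))
        haveI := hPJ.1.1
        obtain ⟨c, hc, hXcP⟩ := (Ideal.IsPrime.prod_mem_iff).mp hwP
        rw [hPC, mem_spanX_X] at hXcP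
        exact absurd hXcP (hCB c hc)
      · exact hPJ.2 ⟨hQp, hJle⟩ hQle

end Stmt9Aux

/-- **Lemma.** Let `J` be a squarefree monomial ideal, `w = ∏_{b ∈ B} x_b` a squarefree
monomial whose variables are disjoint from those of the (minimal) monomial generators of
`J`, and `I = wJ`.  Then `I^(k) = I^k` for all `k ≥ 1` iff `J^(k) = J^k` for all `k ≥ 1`. -/
theorem stmt9 (K : Type*) [Field K] (n : ℕ) (𝒜 : Set (Finset (Fin n)))
    (B : Finset (Fin n)) (J I : Ideal (MvPolynomial (Fin n) K))
    (hJ : J = Ideal.span ((fun A => ∏ a ∈ A, MvPolynomial.X a) '' 𝒜))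
    (hI : I = Ideal.span {(∏ a ∈ B, MvPolynomial.X a : MvPolynomial (Fin n) K)} * J)
    (hdisj : ∀ A ∈ 𝒜, Disjoint B A) :
    (∀ k : ℕ, 1 ≤ k → symbPow I k = I ^ k) ↔ (∀ k : ℕ, 1 ≤ k → symbPow J k = J ^ k) :=  by
  classical
  by_cases hA : 𝒜 = ∅
  · have hJb : J = ⊥ := by rw [hJ, hA, Set.image_empty, Ideal.span_empty]
    have hIb : I = ⊥ := by rw [hI, hJb, Ideal.mul_bot]
    rw [hIb, hJb]
  · have hne : 𝒜.Nonempty := Set.nonempty_iff_ne_empty.mpr hA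
    set dB : Fin n →₀ ℕ := ∑ b ∈ B, Finsupp.single b 1 with hdB
    have hw : (∏ b ∈ B, X b : MvPolynomial (Fin n) K) = monomial dB 1 := Stmt9Aux.prod_X_eq B
    have dB_apply : ∀ i : Fin n, dB i = if i ∈ B then 1 else 0 := fun i =>
      Stmt9Aux.indicator_apply B i
    have hchar := Stmt9Aux.minimalPrimes_I hne hdisj hJ hI
    suffices h : ∀ k : ℕ, (symbPow I k = I ^ k ↔ symbPow J k = J ^ k) by
      exact ⟨fun H k hk => (h k).mp (H k hk), fun H k hk => (h k).mpr (H k hk)⟩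
    intro k
    -- `I^k = (w^k) J^k`
    have hIk : I ^ k
        = Ideal.span {(monomial (k • dB) 1 : MvPolynomial (Fin n) K)} * J ^ k := by
      rw [hI, hw, mul_pow, Ideal.span_singleton_pow, monomial_pow, one_pow]
    -- the intersection of the `(X b)^k` is `(w^k)`
    have hBinf : (⨅ b ∈ (↑B : Set (Fin n)), Ideal.span {(X b : MvPolynomial (Fin n) K)} ^ k)
        = Ideal.span {(monomial (k • dB) 1 : MvPolynomial (Fin n) K)} := by
      have hXk : ∀ b : Fin n, Ideal.span {(X b : MvPolynomial (Fin n) K)} ^ k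
          = Stmt9Aux.mIdl K {Finsupp.single b k} := by
        intro b
        rw [Ideal.span_singleton_pow, X_pow_eq_monomial, Stmt9Aux.mIdl, Set.image_singleton]
      have hR : Ideal.span {(monomial (k • dB) 1 : MvPolynomial (Fin n) K)}
          = Stmt9Aux.mIdl K {k • dB} := by
        rw [Stmt9Aux.mIdl, Set.image_singleton]
      rw [hR]
      ext f
      simp only [Submodule.mem_iInf, hXk, Stmt9Aux.mem_mIdl, Set.mem_singleton_iff,
        exists_eq_left]
      constructor
      · intro h m hm
        refine Finsupp.le_def.mpr fun i => ?_
        rw [Finsupp.smul_apply, smul_eq_mul, dB_apply]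
        by_cases hi : i ∈ B
        · rw [if_pos hi, mul_one]
          have := Finsupp.le_def.mp (h i hi m hm) i
          simpa [Finsupp.single_apply] using this
        · simp [if_neg hi]
      · intro h b hb m hm
        have hb' : b ∈ B := hb
        refine Finsupp.le_def.mpr fun i => ?_
        rcases eq_or_ne b i with rfl | hbi
        · have := Finsupp.le_def.mp (h m hm) b
          rw [Finsupp.smul_apply, smul_eq_mul, dB_apply, if_pos hb', mul_one] at this
          simpa [Finsupp.single_apply] using this
        · simp [Finsupp.single_apply, hbi]
    -- colon property of the symbolic power of `J`
    have hcolon : ∀ f : MvPolynomial (Fin n) K,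
        f * monomial (k • dB) 1 ∈ symbPow J k → f ∈ symbPow J k := by
      intro f hf
      simp only [symbPow, Submodule.mem_iInf] at hf ⊢
      intro P hP
      obtain ⟨C, hPC, hCB⟩ := Stmt9Aux.minimalPrime_structure hdisj hJ hP
      have hf' := hf P hP
      rw [hPC, Stmt9Aux.spanX_eq_mIdl, Stmt9Aux.mIdl_pow] at hf' ⊢
      refine Stmt9Aux.mem_of_mul_monomial_mem ?_ hf'
      apply Stmt9Aux.sumPow_zeros
      rintro d ⟨a, haC, rfl⟩ i hi
      have hiB : i ∈ B := by
        by_contra hiB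
        exact hi (by rw [Finsupp.smul_apply, smul_eq_mul, dB_apply, if_neg hiB, mul_zero])
      have hai : a ≠ i := fun h => hCB i hiB (h ▸ haC)
      simp [Finsupp.single_apply, hai]
    -- `symbPow I k = (w^k) * symbPow J k`
    have hsymbI : symbPow I k
        = Ideal.span {(monomial (k • dB) 1 : MvPolynomial (Fin n) K)} * symbPow J k := by
      have h1 : symbPow I k
          = (⨅ b ∈ (↑B : Set (Fin n)), Ideal.span {(X b : MvPolynomial (Fin n) K)} ^ k)
            ⊓ symbPow J k := by
        rw [symbPow, hchar, _root_.iInf_union, iInf_image]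
        rfl
      rw [h1, hBinf, Stmt9Aux.span_singleton_inf_eq_mul _ _ hcolon]
    have hwk0 : (monomial (k • dB) 1 : MvPolynomial (Fin n) K) ≠ 0 := fun h =>
      one_ne_zero (monomial_eq_zero.mp h)
    constructor
    · intro hEq
      rw [hsymbI, hIk] at hEq
      exact Stmt9Aux.span_singleton_mul_cancel hwk0 hEq
    · intro hEq
      rw [hsymbI, hIk, hEq]
end

section
/- Suppose that j_i <= t_1 + ... + t_i for all i = 1,...,d-1. Then the intervals B_1,...,B_d are pairwise disjoint, i.e., B_p ∩ B_q = ∅ for all 1 <= p < q <= d, where B_r = [t_1 + ... + t_{r-1} + 1, j_r]; moreover, the graded maximal ideal m = (x_1,...,x_n) is not an associated prime of S/B_t(u)^k for any integer k >= 1. -/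
open Finset MvPolynomial

open Fin.NatCast

/-! ### Auxiliary machinery for the proof of `stmt13` -/

/-- weight of the "staircase cut" `c` over blocks `1..r`. -/
def cflWt (V : ℕ → ℕ → ℕ) (b : ℕ → ℕ) (r : ℕ) (c : ℕ → ℕ) : ℕ :=
  ∑ x ∈ Finset.Icc 1 r, ∑ a ∈ Finset.Icc (c x) (min (c (x + 1) - 1) (b x)), V x a

/-- `k`-fold (pointwise) sumset of a set in a monoid. -/
def cflSum {M : Type*} [AddCommMonoid M] (E : Set M) : ℕ → Set M
  | 0 => {0}
  | (k+1) => Set.image2 (· + ·) E (cflSum E k)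

lemma cfl_prod_monomial {K : Type*} [CommSemiring K] {n : ℕ} (s : Finset ℕ)
    (f : ℕ → (Fin n →₀ ℕ)) :
    ∏ r ∈ s, (MvPolynomial.monomial (f r) (1:K)) = MvPolynomial.monomial (∑ r ∈ s, f r) 1 := by
  induction s using Finset.cons_induction with
  | empty => simp
  | cons a s ha ih =>
    rw [Finset.prod_cons, Finset.sum_cons, ih, MvPolynomial.monomial_mul, one_mul]

lemma cfl_span_pow {K : Type*} [Field K] {n : ℕ} [NeZero n] (E : Set (Fin n →₀ ℕ)) (k : ℕ) :
    (Ideal.span ((fun s => MvPolynomial.monomial s (1:K)) '' E)) ^ k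
      = Ideal.span ((fun s => MvPolynomial.monomial s (1:K)) '' cflSum E k) := by
  induction k with
  | zero =>
    rw [pow_zero]
    have h : (fun s => MvPolynomial.monomial s (1:K)) '' cflSum E 0 = {1} := by
      show (fun s => MvPolynomial.monomial s (1:K)) '' {0} = {1}
      rw [Set.image_singleton]
      simp [MvPolynomial.monomial_zero']
    rw [h, Ideal.span_singleton_one, Ideal.one_eq_top]
  | succ k ih =>
    rw [pow_succ', ih, Ideal.span_mul_span']
    congr 1
    show _ = (fun s => MvPolynomial.monomial s (1:K)) '' Set.image2 (· + ·) E (cflSum E k)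
    rw [← Set.image2_mul, Set.image2_image_left, Set.image2_image_right, Set.image_image2]
    apply Set.image2_congr
    intro a _ b _
    rw [MvPolynomial.monomial_mul, one_mul]

lemma cfl_sum_mem {n : ℕ} [NeZero n] (E : Set (Fin n →₀ ℕ)) :
    ∀ (k : ℕ) (g : ℕ → (Fin n →₀ ℕ)),
    (∀ s, 1 ≤ s → s ≤ k → g s ∈ E) → (∑ s ∈ Finset.Icc 1 k, g s) ∈ cflSum E k := by
  intro k
  induction k with
  | zero =>
    intro g _
    show _ ∈ ({0} : Set _)
    simp
  | succ k ih =>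
    intro g hg
    have he : (∑ s ∈ Finset.Icc 1 (k+1), g s) = g (k+1) + ∑ s ∈ Finset.Icc 1 k, g s := by
      rw [Finset.sum_Icc_succ_top (by omega : 1 ≤ k + 1)]
      exact add_comm _ _
    rw [he]
    show _ ∈ Set.image2 (· + ·) E (cflSum E k)
    exact Set.mem_image2.mpr ⟨g (k+1), hg (k+1) (by omega) le_rfl, _,
      ih g (fun s h1 h2 => hg s h1 (by omega)), rfl⟩

lemma cfl_count {n : ℕ} [NeZero n] (E : Set (Fin n →₀ ℕ)) {ι : Type*} (S : Finset ι)
    (φ : ι → Fin n) (hhit : ∀ e ∈ E, ∃ z ∈ S, 1 ≤ e (φ z)) :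
    ∀ (k : ℕ) (F : Fin n →₀ ℕ), F ∈ cflSum E k → ∀ M : Fin n →₀ ℕ, F ≤ M →
      k ≤ ∑ z ∈ S, M (φ z) := by
  intro k
  induction k with
  | zero => intros; exact Nat.zero_le _
  | succ k ih =>
    intro F hF M hM
    obtain ⟨e, he, F', hF', rfl⟩ := Set.mem_image2.mp hF
    have hco : ∀ q, e q + F' q ≤ M q := by
      intro q
      have := Finsupp.le_def.mp hM q
      rwa [Finsupp.add_apply] at this
    have h2 : k ≤ ∑ z ∈ S, (M - e) (φ z) := by
      apply ih F' hF'
      rw [Finsupp.le_def]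
      intro q
      rw [Finsupp.tsub_apply]
      have := hco q
      omega
    obtain ⟨z0, hz0, hez⟩ := hhit e he
    have h1' : e (φ z0) ≤ ∑ z ∈ S, e (φ z) :=
      Finset.single_le_sum (f := fun z => e (φ z)) (fun _ _ => Nat.zero_le _) hz0
    have h1 : 1 ≤ ∑ z ∈ S, e (φ z) := le_trans hez h1'
    have h3 : ∑ z ∈ S, M (φ z) = ∑ z ∈ S, (M - e) (φ z) + ∑ z ∈ S, e (φ z) := by
      rw [← Finset.sum_add_distrib]
      apply Finset.sum_congr rfl
      intro z _
      rw [Finsupp.tsub_apply]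
      have := hco (φ z)
      omega
    omega

theorem cfl_pack (d k : ℕ) (b : ℕ → ℕ) (V : ℕ → ℕ → ℕ)
    (hd : 1 ≤ d)
    (hbm : ∀ x, 1 ≤ x → x + 1 ≤ d → b x ≤ b (x + 1))
    (H : ∀ c : ℕ → ℕ, c 1 = 1 → (∀ x, 1 ≤ x → x ≤ d → c x ≤ c (x + 1)) →
      b d < c (d + 1) → k ≤ cflWt V b d c) :
    ∃ σ : ℕ → ℕ → ℕ,
      (∀ x s, 1 ≤ x → x ≤ d → 1 ≤ s → s ≤ k → 1 ≤ σ x s ∧ σ x s ≤ b x) ∧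
      (∀ x s, 1 ≤ x → x + 1 ≤ d → 1 ≤ s → s ≤ k → σ x s ≤ σ (x + 1) s) ∧
      (∀ x a, 1 ≤ x → x ≤ d →
        ((Finset.Icc 1 k).filter (fun s => σ x s = a)).card ≤ V x a) := by
  have hio : ∀ (m : ℕ) (f : ℕ → ℕ), ∑ x ∈ Finset.Icc 1 m, f x = ∑ x ∈ Finset.Ioc 0 m, f x := by
    intro m f
    apply Finset.sum_congr _ (fun _ _ => rfl)
    ext z; simp; omega
  -- monotonicity of b up to d
  have hble : ∀ x y, 1 ≤ x → x ≤ y → y ≤ d → b x ≤ b y := by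
    have key : ∀ e x, 1 ≤ x → x + e ≤ d → b x ≤ b (x + e) := by
      intro e
      induction e with
      | zero => intro x _ _; simp
      | succ m ih =>
        intro x hx hxd
        have h1 := ih x hx (by omega)
        have h2 := hbm (x + m) (by omega) (by omega)
        have : x + (m + 1) = (x + m) + 1 := by omega
        rw [this]
        omega
    intro x y hx hxy hyd
    have := key (y - x) x hx (by omega)
    rwa [show x + (y - x) = y by omega] at this
  -- the inductive statement
  suffices h : ∀ r, r ≤ d → ∃ σ : ℕ → ℕ → ℕ,
      (∀ s, σ 0 s = 1) ∧
      (∀ x s, 1 ≤ x → x ≤ r → 1 ≤ s → s ≤ k → 1 ≤ σ x s ∧ σ x s ≤ b x) ∧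
      (∀ x s s', x ≤ r → 1 ≤ s → s ≤ s' → s' ≤ k → σ x s ≤ σ x s') ∧
      (∀ x s, x + 1 ≤ r → 1 ≤ s → s ≤ k → σ x s ≤ σ (x + 1) s) ∧
      (∀ x a, 1 ≤ x → x ≤ r →
        ((Finset.Icc 1 k).filter (fun s => σ x s = a)).card ≤ V x a) ∧
      (∀ s, 1 ≤ s → s ≤ k → ∃ c : ℕ → ℕ, c 1 = 1 ∧
        (∀ x, 1 ≤ x → x ≤ r → c x ≤ c (x + 1)) ∧ c (r + 1) = σ r s ∧
        cflWt V b r c < s) by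
    obtain ⟨σ, _, hA1, _, hA3, hA4, _⟩ := h d le_rfl
    exact ⟨σ, hA1, fun x s hx hxd => hA3 x s hxd, hA4⟩
  intro r
  induction r with
  | zero =>
    intro _
    refine ⟨fun _ _ => 1, fun _ => rfl, by omega, ?_, by omega, by omega, ?_⟩
    · intro x s s' _ _ _ _; exact le_rfl
    intro s hs _
    refine ⟨fun _ => 1, rfl, by omega, rfl, ?_⟩
    have : cflWt V b 0 (fun _ => 1) = 0 := by
      simp [cflWt]
    omega
  | succ r IH =>
    intro hr1
    obtain ⟨σ, hA0, hA1, hA2, hA3, hA4, hA5⟩ := IH (by omega)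
    -- lower bound of the current top row
    have hσr1 : ∀ s, 1 ≤ s → s ≤ k → 1 ≤ σ r s := by
      intro s hs hsk
      rcases Nat.eq_zero_or_pos r with h | h
      · rw [h, hA0]
      · exact (hA1 r s h le_rfl hs hsk).1
    have hσrbd : ∀ s, 1 ≤ s → s ≤ k → σ r s ≤ b d + 1 := by
      intro s hs hsk
      rcases Nat.eq_zero_or_pos r with h | h
      · rw [h, hA0]; omega
      · have := (hA1 r s h le_rfl hs hsk).2
        have := hble r d h (by omega) le_rfl
        omega
    set A : ℕ → Set ℕ := fun s => {v | ∀ s', 1 ≤ s' → s' ≤ s →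
      s + 1 ≤ s' + ∑ a ∈ Finset.Icc (σ r s') v, V (r+1) a} with hA
    have mem_bA : ∀ s, 1 ≤ s → s ≤ k → b (r+1) ∈ A s := by
      intro s hs hsk s' hs'1 hs's
      obtain ⟨c, hc1, hcm, hctop, hcw⟩ := hA5 s' hs'1 (by omega)
      set c2 : ℕ → ℕ := fun x => if x ≤ r + 1 then c x else b d + 1 with hc2
      have hc2low : ∀ x, x ≤ r + 1 → c2 x = c x := by
        intro x hx; simp [hc2, if_pos hx]
      have hc2high : ∀ x, r + 1 < x → c2 x = b d + 1 := by
        intro x hx; simp [hc2, show ¬ (x ≤ r+1) by omega]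
      have hkey := H c2 (by rw [hc2low 1 (by omega)]; exact hc1) ?_ ?_
      · -- compute cflWt V b d c2
        have e1 : ∀ x ∈ Finset.Ioc 0 r,
            (∑ a ∈ Finset.Icc (c2 x) (min (c2 (x+1) - 1) (b x)), V x a)
            = ∑ a ∈ Finset.Icc (c x) (min (c (x+1) - 1) (b x)), V x a := by
          intro x hx
          simp only [Finset.mem_Ioc] at hx
          rw [hc2low x (by omega), hc2low (x+1) (by omega)]
        have e2 : ∀ x ∈ Finset.Ioc (r+1) d,
            (∑ a ∈ Finset.Icc (c2 x) (min (c2 (x+1) - 1) (b x)), V x a) = 0 := by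
          intro x hx
          simp only [Finset.mem_Ioc] at hx
          have hbx : b x ≤ b d := hble x d (by omega) hx.2 le_rfl
          have : Finset.Icc (c2 x) (min (c2 (x+1) - 1) (b x)) = ∅ := by
            apply Finset.Icc_eq_empty
            rw [hc2high x (by omega)]
            omega
          rw [this, Finset.sum_empty]
        have e3 : (∑ a ∈ Finset.Icc (c2 (r+1)) (min (c2 (r+1+1) - 1) (b (r+1))), V (r+1) a)
            = ∑ a ∈ Finset.Icc (σ r s') (b (r+1)), V (r+1) a := by
          have h3 : min (b d + 1 - 1) (b (r+1)) = b (r+1) := by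
            have := hble (r+1) d (by omega) hr1 le_rfl
            omega
          rw [hc2low (r+1) le_rfl, hc2high (r+1+1) (by omega), hctop, h3]
        have hsplit : cflWt V b d c2 =
            cflWt V b r c + ∑ a ∈ Finset.Icc (σ r s') (b (r+1)), V (r+1) a := by
          unfold cflWt
          rw [hio d, hio r]
          rw [← Finset.sum_Ioc_consecutive _ (by omega : (0:ℕ) ≤ r+1) (by omega : r+1 ≤ d)]
          rw [Finset.sum_Ioc_succ_top (by omega : (0:ℕ) ≤ r)]
          rw [Finset.sum_eq_zero e2, Finset.sum_congr rfl e1, e3, add_zero]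
        rw [hsplit] at hkey
        omega
      · -- monotonicity of c2
        intro x hx1 hxd
        rcases Nat.lt_or_ge (x+1) (r+2) with h | h
        · rw [hc2low x (by omega), hc2low (x+1) (by omega)]
          exact hcm x hx1 (by omega)
        · rcases Nat.lt_or_ge x (r+2) with h3 | h3
          · rw [hc2low x (by omega), hc2high (x+1) (by omega),
              show x = r + 1 by omega, hctop]
            exact hσrbd s' hs'1 (by omega)
          · rw [hc2high x (by omega), hc2high (x+1) (by omega)]
      · -- c2 (d+1) > b d
        rw [hc2high (d+1) (by omega)]
        omega
    have hτmem : ∀ s, 1 ≤ s → s ≤ k → sInf (A s) ∈ A s := by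
      intro s hs hsk
      exact Nat.sInf_mem ⟨b (r+1), mem_bA s hs hsk⟩
    have hτle : ∀ s, 1 ≤ s → s ≤ k → sInf (A s) ≤ b (r+1) := by
      intro s hs hsk
      exact Nat.sInf_le (mem_bA s hs hsk)
    have hτge : ∀ s, 1 ≤ s → s ≤ k → σ r s ≤ sInf (A s) := by
      intro s hs hsk
      by_contra hcon
      push_neg at hcon
      have h0 := hτmem s hs hsk s hs le_rfl
      rw [Finset.Icc_eq_empty (by omega)] at h0
      simp at h0
    have hτ1 : ∀ s, 1 ≤ s → s ≤ k → 1 ≤ sInf (A s) := by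
      intro s hs hsk
      exact le_trans (hσr1 s hs hsk) (hτge s hs hsk)
    have hτmono : ∀ s s', 1 ≤ s → s ≤ s' → s' ≤ k → sInf (A s) ≤ sInf (A s') := by
      intro s s' hs hss' hs'k
      apply Nat.sInf_le
      intro s'' h1 h2
      have := hτmem s' (by omega) hs'k s'' h1 (by omega)
      omega
    have hτnot : ∀ s, 1 ≤ s → s ≤ k → ∃ s'', 1 ≤ s'' ∧ s'' ≤ s ∧
        s'' + ∑ a ∈ Finset.Icc (σ r s'') (sInf (A s) - 1), V (r+1) a ≤ s := by
      intro s hs hsk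
      have h1 : sInf (A s) - 1 ∉ A s := by
        apply Nat.notMem_of_lt_sInf
        have := hτ1 s hs hsk
        omega
      have h1' : ¬ (∀ s', 1 ≤ s' → s' ≤ s →
          s + 1 ≤ s' + ∑ a ∈ Finset.Icc (σ r s') (sInf (A s) - 1), V (r+1) a) := h1
      push_neg at h1'
      obtain ⟨s'', h2, h3, h4⟩ := h1'
      refine ⟨s'', h2, h3, by omega⟩
    -- the new σ
    refine ⟨fun x => if x = r + 1 then (fun s => sInf (A s)) else σ x, ?_, ?_, ?_, ?_, ?_, ?_⟩
    · intro s; beta_reduce; rw [if_neg (show (0:ℕ) ≠ r + 1 by omega)]; exact hA0 s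
    · intro x s hx1 hxr hs hsk
      beta_reduce
      by_cases h : x = r + 1
      · subst h
        rw [if_pos rfl]
        exact ⟨hτ1 s hs hsk, hτle s hs hsk⟩
      · rw [if_neg h]
        exact hA1 x s hx1 (by omega) hs hsk
    · intro x s s' hxr hs hss' hs'k
      beta_reduce
      by_cases h : x = r + 1
      · subst h
        rw [if_pos rfl]
        exact hτmono s s' hs hss' hs'k
      · rw [if_neg h]
        exact hA2 x s s' (by omega) hs hss' hs'k
    · intro x s hxr hs hsk
      beta_reduce
      by_cases h : x + 1 = r + 1
      · rw [if_neg (show x ≠ r + 1 by omega), if_pos h, show x = r by omega]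
        exact hτge s hs hsk
      · rw [if_neg (show x ≠ r + 1 by omega), if_neg h]
        exact hA3 x s (by omega) hs hsk
    · intro x a hx1 hxr
      beta_reduce
      by_cases h : x = r + 1
      · subst h
        rw [if_pos rfl]
        -- counting argument
        set F := (Finset.Icc 1 k).filter (fun s => sInf (A s) = a) with hF
        rcases Finset.eq_empty_or_nonempty F with hFe | hFne
        · rw [hFe]; simp
        · set s0 := F.min' hFne with hs0
          set s1 := F.max' hFne with hs1
          have hs0F : s0 ∈ F := F.min'_mem hFne
          have hs1F : s1 ∈ F := F.max'_mem hFne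
          have hs01 : s0 ≤ s1 := F.min'_le s1 (F.max'_mem hFne)
          simp only [hF, Finset.mem_filter, Finset.mem_Icc] at hs0F hs1F
          have hsub : F ⊆ Finset.Icc s0 s1 := by
            intro s hsF
            simp only [Finset.mem_Icc]
            exact ⟨F.min'_le s hsF, F.le_max' s hsF⟩
          have hcard : F.card ≤ s1 + 1 - s0 := by
            have := Finset.card_le_card hsub
            rwa [Nat.card_Icc] at this
          have ha1 : 1 ≤ a := by
            rw [← hs0F.2]
            exact hτ1 s0 hs0F.1.1 hs0F.1.2
          obtain ⟨s'', h2, h3, h4⟩ := hτnot s0 hs0F.1.1 hs0F.1.2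
          rw [hs0F.2] at h4
          have h5 := hτmem s1 hs1F.1.1 hs1F.1.2 s'' h2 (by omega)
          rw [hs1F.2] at h5
          have hσa : σ r s'' ≤ a := by
            have e1 : σ r s'' ≤ σ r s0 := hA2 r s'' s0 le_rfl h2 h3 hs0F.1.2
            have e2 := hτge s0 hs0F.1.1 hs0F.1.2
            rw [hs0F.2] at e2
            omega
          have hsplit : ∑ a' ∈ Finset.Icc (σ r s'') a, V (r+1) a'
              = ∑ a' ∈ Finset.Icc (σ r s'') (a - 1), V (r+1) a' + V (r+1) a := by
            have he : a = (a - 1) + 1 := by omega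
            rw [he, Finset.sum_Icc_succ_top (by omega)]
            congr 2 <;> omega
          rw [hsplit] at h5
          omega
      · rw [if_neg h]
        exact hA4 x a hx1 (by omega)
    · intro s hs hsk
      obtain ⟨s'', h2, h3, h4⟩ := hτnot s hs hsk
      obtain ⟨c, hc1, hcm, hctop, hcw⟩ := hA5 s'' h2 (by omega)
      refine ⟨fun x => if x = r + 2 then sInf (A s) else c x, ?_, ?_, ?_, ?_⟩
      · beta_reduce; rw [if_neg (show 1 ≠ r + 2 by omega)]; exact hc1
      · intro x hx1 hxr
        beta_reduce
        by_cases h : x + 1 = r + 2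
        · rw [if_neg (show x ≠ r + 2 by omega), if_pos h, show x = r + 1 by omega, hctop]
          have e1 : σ r s'' ≤ σ r s := hA2 r s'' s le_rfl h2 h3 hsk
          have e2 := hτge s hs hsk
          omega
        · rw [if_neg (show x ≠ r + 2 by omega), if_neg h]
          exact hcm x hx1 (by omega)
      · beta_reduce; rw [if_pos rfl, if_pos rfl]
      · -- weight bound
        have hw : cflWt V b (r+1) (fun x => if x = r + 2 then sInf (A s) else c x)
            = cflWt V b r c +
              ∑ a ∈ Finset.Icc (σ r s'') (min (sInf (A s) - 1) (b (r+1))), V (r+1) a := by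
          unfold cflWt
          rw [Finset.sum_Icc_succ_top (by omega : 1 ≤ r + 1)]
          congr 1
          · apply Finset.sum_congr rfl
            intro x hx
            simp only [Finset.mem_Icc] at hx
            beta_reduce
            rw [if_neg (show x ≠ r + 2 by omega), if_neg (show x + 1 ≠ r + 2 by omega)]
          · beta_reduce
            rw [if_neg (show r + 1 ≠ r + 2 by omega), if_pos rfl, hctop]
        rw [hw]
        have hb2 : ∑ a ∈ Finset.Icc (σ r s'') (min (sInf (A s) - 1) (b (r+1))), V (r+1) a
            ≤ ∑ a ∈ Finset.Icc (σ r s'') (sInf (A s) - 1), V (r+1) a := by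
          apply Finset.sum_le_sum_of_subset
          apply Finset.Icc_subset_Icc_right
          omega
        omega

/-- **Proposition (b).** If `j i ≤ t 1 + ⋯ + t i` for all `i = 1,…,d-1`, then the
intervals `B_r = [t 1 + ⋯ + t (r-1) + 1, j r]` are pairwise disjoint and
`m = (x_1,…,x_n) ∉ Ass(S/B_t(u)^k)` for all `k ≥ 1`. -/
theorem stmt13 (K : Type*) [Field K] (n d : ℕ) [NeZero n] (t j : ℕ → ℕ)
    (hd : 2 ≤ d) (ht : ∀ k, 1 ≤ k → k ≤ d - 1 → 1 ≤ t k)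
    (hj1 : 1 ≤ j 1) (hjmono : ∀ p q, 1 ≤ p → p < q → q ≤ d → j p < j q)
    (hjd : j d = n) (hspread : ∀ k, 1 ≤ k → k ≤ d - 1 → j k + t k ≤ j (k + 1))
    (hc : ∀ r, 1 ≤ r → r ≤ d - 1 → j r ≤ ∑ s ∈ Finset.Icc 1 r, t s) :
    (∀ p q, 1 ≤ p → p < q → q ≤ d →
      Disjoint (Finset.Icc ((∑ s ∈ Finset.Icc 1 (p - 1), t s) + 1) (j p))
        (Finset.Icc ((∑ s ∈ Finset.Icc 1 (q - 1), t s) + 1) (j q))) ∧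
    ∀ k : ℕ, 1 ≤ k →
      Ideal.span (Set.range (MvPolynomial.X : Fin n → MvPolynomial (Fin n) K)) ∉
        associatedPrimes (MvPolynomial (Fin n) K)
          (MvPolynomial (Fin n) K ⧸ tBorel K n d t j ^ k) := by
  classical
  -- `T r = t 1 + ⋯ + t r`
  set T : ℕ → ℕ := fun r => ∑ s ∈ Finset.Icc 1 r, t s with hT
  have hT0 : T 0 = 0 := by simp [hT]
  have hTsucc : ∀ r, T (r + 1) = T r + t (r + 1) := by
    intro r
    simp only [hT]
    rw [Finset.sum_Icc_succ_top (by omega : 1 ≤ r + 1)]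
  have hTmono : ∀ a b : ℕ, a ≤ b → T a ≤ T b := by
    intro a b hab
    exact Finset.sum_le_sum_of_subset (Finset.Icc_subset_Icc_right hab)
  have ht1 : 1 ≤ t 1 := ht 1 le_rfl (by omega)
  have hT1 : T 1 = t 1 := by simp [hT]
  have hjle : ∀ r, 1 ≤ r → r ≤ d → j r ≤ n := by
    intro r h1 h2
    rcases Nat.eq_or_lt_of_le h2 with h | h
    · rw [h, hjd]
    · have := hjmono r d h1 h le_rfl
      omega
  have hjlow : ∀ r, 1 ≤ r → r ≤ d → T (r - 1) + 1 ≤ j r := by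
    intro r
    induction r with
    | zero => omega
    | succ m ih =>
      intro _ hmd
      rcases Nat.eq_zero_or_pos m with h | h
      · subst h
        simpa [hT0] using hj1
      · have h1 := ih (by omega) (by omega)
        have h2 := hspread m h (by omega)
        have h3 := hTsucc (m - 1)
        rw [show m - 1 + 1 = m by omega] at h3
        simp only [Nat.add_sub_cancel]
        omega
  have hblock : ∀ p q, 1 ≤ p → p < q → q ≤ d → j p ≤ T (q - 1) := by
    intro p q h1 h2 h3
    have h4 := hc p h1 (by omega)
    have h5 := hTmono p (q - 1) (by omega)
    simp only [hT] at *
    omega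
  constructor
  · intro p q h1 h2 h3
    rw [Finset.disjoint_left]
    intro x hx1 hx2
    rw [Finset.mem_Icc] at hx1 hx2
    have h4 := hblock p q h1 h2 h3
    simp only [hT] at h4
    omega
  -- part 2
  intro k hk hass
  obtain ⟨hprime, x, hann⟩ := isAssociatedPrime_iff.mp hass
  obtain ⟨f, rfl⟩ := Ideal.Quotient.mk_surjective x
  -- spread generators live in the blocks
  have hspm : ∀ i ∈ spreadIdx d t j, ∀ r, 1 ≤ r → r ≤ d → T (r - 1) + 1 ≤ i r ∧ i r ≤ j r := by
    intro i hi
    obtain ⟨hi1, hi2⟩ := hi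
    intro r
    induction r with
    | zero => omega
    | succ m ih =>
      intro _ hmd
      refine ⟨?_, (hi1 (m+1) (by omega) hmd).2⟩
      rcases Nat.eq_zero_or_pos m with h | h
      · subst h
        simpa [hT0] using (hi1 1 le_rfl (by omega)).1
      · have h1 := (ih (by omega) (by omega)).1
        have h2 := hi2 m h (by omega)
        have h3 := hTsucc (m - 1)
        rw [show m - 1 + 1 = m by omega] at h3
        simp only [Nat.add_sub_cancel]
        omega
  -- the ideal as a monomial ideal
  set dE : (ℕ → ℕ) → (Fin n →₀ ℕ) :=
    fun i => ∑ r ∈ Finset.Icc 1 d, Finsupp.single ((i r - 1 : ℕ) : Fin n) 1 with hdE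
  set E : Set (Fin n →₀ ℕ) := dE '' spreadIdx d t j with hE
  have hIdeq : tBorel K n d t j ^ k
      = Ideal.span ((fun s => MvPolynomial.monomial s (1:K)) '' cflSum E k) := by
    rw [← cfl_span_pow]
    congr 1
    show Ideal.span ((fun i => monOf K n d i) '' spreadIdx d t j) = _
    congr 1
    rw [hE, ← Set.image_comp]
    apply Set.image_congr
    intro i _
    show monOf K n d i = MvPolynomial.monomial (dE i) 1
    rw [hdE, ← cfl_prod_monomial]
    apply Finset.prod_congr rfl
    intro r _
    rfl
  -- 1 is not in the maximal ideal
  have hone : (1 : MvPolynomial (Fin n) K) ∉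
      Ideal.span (Set.range (MvPolynomial.X : Fin n → MvPolynomial (Fin n) K)) := by
    intro hmem
    have hle : Ideal.span (Set.range (MvPolynomial.X : Fin n → MvPolynomial (Fin n) K))
        ≤ RingHom.ker (MvPolynomial.aeval (fun _ : Fin n => (0:K))).toRingHom := by
      rw [Ideal.span_le]
      rintro _ ⟨v, rfl⟩
      simp [RingHom.mem_ker]
    have h2 := hle hmem
    rw [RingHom.mem_ker] at h2
    simp at h2
  have hf : f ∉ tBorel K n d t j ^ k := by
    intro hmem
    rw [← Ideal.Quotient.eq_zero_iff_mem] at hmem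
    rw [hmem] at hann
    apply hone
    rw [hann, Submodule.mem_colon_singleton]
    simp
  have hXf : ∀ v : Fin n, MvPolynomial.X v * f ∈ tBorel K n d t j ^ k := by
    intro v
    have hv : (MvPolynomial.X v : MvPolynomial (Fin n) K) ∈
        Ideal.span (Set.range (MvPolynomial.X : Fin n → MvPolynomial (Fin n) K)) :=
      Ideal.subset_span ⟨v, rfl⟩
    rw [hann, Submodule.mem_colon_singleton, Submodule.mem_bot] at hv
    rw [← Ideal.Quotient.eq_zero_iff_mem]
    have he : Ideal.Quotient.mk (tBorel K n d t j ^ k) (MvPolynomial.X v * f)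
        = (MvPolynomial.X v : MvPolynomial (Fin n) K)
          • Ideal.Quotient.mk (tBorel K n d t j ^ k) f := by
      rw [map_mul, ← Ideal.Quotient.algebraMap_eq, ← Algebra.smul_def]
    rw [he, hv]
  rw [hIdeq, MvPolynomial.mem_ideal_span_monomial_image] at hf
  push_neg at hf
  obtain ⟨m0, hm0supp, hm0⟩ := hf
  have hgetF : ∀ v : Fin n, ∃ F ∈ cflSum E k, F ≤ Finsupp.single v 1 + m0 := by
    intro v
    have h := hXf v
    rw [hIdeq, MvPolynomial.mem_ideal_span_monomial_image] at h
    apply h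
    rw [MvPolynomial.mem_support_iff, MvPolynomial.coeff_X_mul]
    exact MvPolynomial.mem_support_iff.mp hm0supp
  -- block sizes and supply
  set bb : ℕ → ℕ := fun r => j r - T (r - 1) with hbb
  set V : ℕ → ℕ → ℕ := fun r a => m0 ((T (r - 1) + a - 1 : ℕ) : Fin n) with hV
  -- every generator is caught by every staircase cut
  have hhit : ∀ (c : ℕ → ℕ), c 1 = 1 → (∀ x, 1 ≤ x → x ≤ d → c x ≤ c (x+1)) →
      bb d < c (d+1) → ∀ i ∈ spreadIdx d t j, ∃ x, 1 ≤ x ∧ x ≤ d ∧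
      c x ≤ i x - T (x-1) ∧ i x - T (x-1) ≤ min (c (x+1) - 1) (bb x) := by
    intro c hc1 hcm hcd i hi
    by_contra hno
    push_neg at hno
    have key : ∀ x, 1 ≤ x → x ≤ d → c (x + 1) ≤ i x - T (x - 1) := by
      intro x
      induction x with
      | zero => omega
      | succ m ih =>
        intro _ hmd
        have hax := hspm i hi (m+1) (by omega) hmd
        have haxb : i (m+1) - T (m+1-1) ≤ bb (m+1) := by
          simp only [hbb]
          omega
        have hclow : c (m+1) ≤ i (m+1) - T (m+1-1) := by
          rcases Nat.eq_zero_or_pos m with h | h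
          · subst h
            rw [hc1]
            simp only [Nat.add_sub_cancel, hT0]
            omega
          · have h1 := ih (by omega) (by omega)
            have h2 := (hi.2) m h (by omega)
            have h3 := hTsucc (m-1)
            rw [show m - 1 + 1 = m by omega] at h3
            have h4 := (hspm i hi m h (by omega)).1
            simp only [Nat.add_sub_cancel]
            omega
        have h5 := hno (m+1) (by omega) hmd hclow
        omega
    have hfin := key d (by omega) le_rfl
    have h6 := hspm i hi d (by omega) le_rfl
    have hbbd : i d - T (d-1) ≤ bb d := by
      simp only [hbb]
      omega
    omega
  -- the cut-weight hypothesis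
  have Hc : ∀ c : ℕ → ℕ, c 1 = 1 → (∀ x, 1 ≤ x → x ≤ d → c x ≤ c (x+1)) →
      bb d < c (d+1) → k ≤ cflWt V bb d c := by
    intro c hc1 hcm hcd
    have hcge : ∀ x y, 1 ≤ x → x ≤ y → y ≤ d → c x ≤ c y := by
      have keyc : ∀ e x, 1 ≤ x → x + e ≤ d → c x ≤ c (x + e) := by
        intro e
        induction e with
        | zero => intro x _ _; simp
        | succ m ihm =>
          intro x hx hxd
          have h1 := ihm x hx (by omega)
          have h2 := hcm (x + m) (by omega) (by omega)
          rw [show x + (m + 1) = (x + m) + 1 by omega]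
          omega
      intro x y hx hxy hyd
      have := keyc (y - x) x hx (by omega)
      rwa [show x + (y - x) = y by omega] at this
    set p0 : ℕ := if c 2 = 1 then 1 else T 1 + 1 with hp0
    have hp0n : 1 ≤ p0 ∧ p0 ≤ n := by
      have h2 : T 1 + 1 ≤ j 2 := hjlow 2 (by omega) hd
      have h3 := hjle 2 (by omega) hd
      rw [hp0]
      split <;> omega
    set v : Fin n := ((p0 - 1 : ℕ) : Fin n) with hv0
    obtain ⟨F, hF, hFle⟩ := hgetF v
    set Scut : Finset ((_ : ℕ) × ℕ) :=
      (Finset.Icc 1 d).sigma (fun x => Finset.Icc (c x) (min (c (x+1) - 1) (bb x))) with hScut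
    set φ : ((_ : ℕ) × ℕ) → Fin n := fun z => ((T (z.1 - 1) + z.2 - 1 : ℕ) : Fin n) with hφ
    have hhit' : ∀ e ∈ E, ∃ z ∈ Scut, 1 ≤ e (φ z) := by
      rw [hE]
      rintro e ⟨i, hi, rfl⟩
      obtain ⟨x, hx1, hxd, hxa1, hxa2⟩ := hhit c hc1 hcm hcd i hi
      refine ⟨⟨x, i x - T (x - 1)⟩, ?_, ?_⟩
      · simp only [hScut, Finset.mem_sigma, Finset.mem_Icc]
        exact ⟨⟨hx1, hxd⟩, hxa1, hxa2⟩
      · show 1 ≤ (∑ r ∈ Finset.Icc 1 d, Finsupp.single ((i r - 1 : ℕ) : Fin n) 1)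
          (φ ⟨x, i x - T (x-1)⟩)
        rw [Finsupp.finset_sum_apply]
        have hlow := (hspm i hi x hx1 hxd).1
        have harg : T (x - 1) + (i x - T (x-1)) - 1 = i x - 1 := by omega
        have hterm : (Finsupp.single ((i x - 1 : ℕ) : Fin n) 1)
            (φ ⟨x, i x - T (x-1)⟩) = 1 := by
          simp only [hφ]
          rw [harg, Finsupp.single_apply, if_pos rfl]
        calc (1:ℕ) = _ := hterm.symm
          _ ≤ _ := Finset.single_le_sum
            (f := fun r => (Finsupp.single ((i r - 1 : ℕ) : Fin n) 1)
              (φ ⟨x, i x - T (x-1)⟩))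
            (fun _ _ => Nat.zero_le _) (by rw [Finset.mem_Icc]; omega)
    have hcount := cfl_count E Scut φ hhit' k F hF (Finsupp.single v 1 + m0) hFle
    -- the chosen variable avoids the cut
    have hvne : ∀ x a, 1 ≤ x → x ≤ d → c x ≤ a → a ≤ min (c (x+1) - 1) (bb x) →
        v ≠ ((T (x-1) + a - 1 : ℕ) : Fin n) := by
      intro x a hx1 hxd ha1 ha2 heq
      have hc1x : 1 ≤ c x := by
        have := hcge 1 x le_rfl hx1 hxd
        omega
      have hapos : 1 ≤ a := by omega
      have hjx := hjle x hx1 hxd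
      have hjlx := hjlow x hx1 hxd
      have hpn : T (x-1) + a ≤ n := by
        have : a ≤ bb x := by omega
        simp only [hbb] at this
        omega
      have hval1 : ((p0 - 1 : ℕ) : Fin n).val = p0 - 1 :=
        Fin.val_cast_of_lt (by omega)
      have hval2 : ((T (x-1) + a - 1 : ℕ) : Fin n).val = T (x-1) + a - 1 :=
        Fin.val_cast_of_lt (by omega)
      rw [hv0] at heq
      have hpp : p0 = T (x-1) + a := by
        have := congrArg Fin.val heq
        rw [hval1, hval2] at this
        omega
      by_cases hcc : c 2 = 1
      · have hp01 : p0 = 1 := by rw [hp0, if_pos hcc]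
        rcases Nat.eq_or_lt_of_le hx1 with hx | hx
        · -- x = 1 : a ≤ c 2 - 1 = 0, contradiction
          rw [show x = 1 by omega, show (1:ℕ) + 1 = 2 by norm_num] at ha2
          omega
        · -- x ≥ 2 : T (x-1) ≥ T 1 ≥ 1
          have : T 1 ≤ T (x - 1) := hTmono 1 (x-1) (by omega)
          omega
      · have hc2 : 2 ≤ c 2 := by
          have := hcge 1 2 le_rfl (by omega) hd
          omega
        have hp02 : p0 = T 1 + 1 := by rw [hp0, if_neg hcc]
        rcases Nat.lt_or_ge x 2 with hx | hx
        · -- x = 1 : a ≤ bb 1 = j 1 ≤ T 1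
          have hx1' : x = 1 := by omega
          have hj1T : j 1 ≤ T 1 := hc 1 le_rfl (by omega)
          have : a ≤ bb 1 := by rw [← hx1']; omega
          simp only [hbb, hT0] at this
          rw [hx1'] at hpp
          simp only [hT0] at hpp
          omega
        · rcases Nat.eq_or_lt_of_le hx with hx2 | hx2
          · -- x = 2 : a = 1 < c 2
            rw [show x = 2 by omega] at hpp ha1
            rw [show (2:ℕ) - 1 = 1 by norm_num] at hpp
            omega
          · -- x ≥ 3 : T (x-1) ≥ T 2 = T 1 + t 2 ≥ T 1 + 1
            have ht2 : 1 ≤ t 2 := ht 2 (by omega) (by omega)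
            have hT2 : T 2 = T 1 + t 2 := hTsucc 1
            have : T 2 ≤ T (x - 1) := hTmono 2 (x-1) (by omega)
            omega
    have hsum : ∑ z ∈ Scut, (Finsupp.single v (1:ℕ) + m0) (φ z) = cflWt V bb d c := by
      have hzz : ∀ z ∈ Scut, (Finsupp.single v (1:ℕ) + m0) (φ z) = m0 (φ z) := by
        intro z hz
        simp only [hScut, Finset.mem_sigma, Finset.mem_Icc] at hz
        rw [Finsupp.add_apply, Finsupp.single_apply,
          if_neg (hvne z.1 z.2 hz.1.1 hz.1.2 hz.2.1 hz.2.2), zero_add]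
      rw [Finset.sum_congr rfl hzz, hScut, Finset.sum_sigma]
      rfl
    rw [hsum] at hcount
    exact hcount
  -- pack k chains inside m0
  have hbm : ∀ x, 1 ≤ x → x + 1 ≤ d → bb x ≤ bb (x+1) := by
    intro x h1 h2
    have h3 := hspread x h1 (by omega)
    have h4 := hTsucc (x-1)
    rw [show x - 1 + 1 = x by omega] at h4
    have h5 := hjlow x h1 (by omega)
    simp only [hbb, Nat.add_sub_cancel]
    omega
  obtain ⟨σ, hB1, hB2, hB3⟩ := cfl_pack d k bb V (by omega) hbm Hc
  set ii : ℕ → ℕ → ℕ := fun s r => T (r - 1) + σ r s with hii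
  have hiimem : ∀ s, 1 ≤ s → s ≤ k → ii s ∈ spreadIdx d t j := by
    intro s h1 h2
    constructor
    · intro r hr1 hrd
      have h3 := hB1 r s hr1 hrd h1 h2
      have h4 := hjlow r hr1 hrd
      simp only [hii]
      simp only [hbb] at h3
      constructor <;> omega
    · intro r hr1 hrd
      have h3 := hB2 r s hr1 hrd h1 h2
      have h4 := hTsucc (r-1)
      rw [show r - 1 + 1 = r by omega] at h4
      simp only [hii, Nat.add_sub_cancel]
      omega
  have hFFmem : (∑ s ∈ Finset.Icc 1 k, dE (ii s)) ∈ cflSum E k := by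
    apply cfl_sum_mem
    intro s h1 h2
    rw [hE]
    exact ⟨ii s, hiimem s h1 h2, rfl⟩
  apply hm0 _ hFFmem
  -- the packed sum is dominated by m0
  rw [Finsupp.le_def]
  intro q
  rw [Finsupp.finset_sum_apply]
  by_cases hq : ∃ r0, 1 ≤ r0 ∧ r0 ≤ d ∧ T (r0 - 1) + 1 ≤ (q : ℕ) + 1 ∧ (q:ℕ) + 1 ≤ j r0
  · obtain ⟨r0, hr01, hr0d, hq1, hq2⟩ := hq
    set a0 : ℕ := (q:ℕ) + 1 - T (r0 - 1) with ha0
    have hcast : ((T (r0-1) + a0 - 1 : ℕ) : Fin n) = q := by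
      have h1 : T (r0-1) + a0 - 1 = (q:ℕ) := by omega
      rw [h1]
      exact Fin.cast_val_eq_self q
    have key : ∀ s ∈ Finset.Icc 1 k, dE (ii s) q = if σ r0 s = a0 then 1 else 0 := by
      intro s hs
      rw [Finset.mem_Icc] at hs
      rw [hdE]
      beta_reduce
      rw [Finsupp.finset_sum_apply]
      have hterm : ∀ r ∈ Finset.Icc 1 d, (Finsupp.single ((ii s r - 1 : ℕ) : Fin n) 1) q
          = if r = r0 ∧ σ r0 s = a0 then 1 else 0 := by
        intro r hr
        rw [Finset.mem_Icc] at hr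
        have hbnd := hB1 r s hr.1 hr.2 hs.1 hs.2
        have hjr := hjlow r hr.1 hr.2
        have hjn := hjle r hr.1 hr.2
        have hiir : T (r-1) + 1 ≤ ii s r ∧ ii s r ≤ j r := by
          simp only [hii]
          simp only [hbb] at hbnd
          constructor <;> omega
        have hval : ((ii s r - 1 : ℕ) : Fin n).val = ii s r - 1 :=
          Fin.val_cast_of_lt (by omega)
        rw [Finsupp.single_apply]
        by_cases hrr : ((ii s r - 1 : ℕ) : Fin n) = q
        · rw [if_pos hrr]
          have hvq : ii s r - 1 = (q:ℕ) := by rw [← hval, hrr]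
          have hr0 : r = r0 := by
            by_contra hne
            rcases Nat.lt_or_ge r r0 with h | h
            · have := hblock r r0 hr.1 h hr0d
              omega
            · have hgt : r0 < r := by omega
              have := hblock r0 r hr01 hgt hr.2
              omega
          subst hr0
          have hii2 : ii s r = T (r-1) + σ r s := rfl
          have hσ : σ r s = a0 := by omega
          rw [if_pos ⟨rfl, hσ⟩]
        · rw [if_neg hrr, if_neg]
          rintro ⟨rfl, hσ⟩
          apply hrr
          have : ii s r = T (r-1) + a0 := by
            simp only [hii]
            omega
          rw [this, hcast]
      rw [Finset.sum_congr rfl hterm]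
      by_cases hP : σ r0 s = a0
      · rw [if_pos hP]
        have hc2 : ∀ r ∈ Finset.Icc 1 d,
            (if r = r0 ∧ σ r0 s = a0 then (1:ℕ) else 0) = if r = r0 then 1 else 0 := by
          intro r _
          simp [hP]
        rw [Finset.sum_congr rfl hc2,
          Finset.sum_ite_eq' (Finset.Icc 1 d) r0 (fun _ => (1:ℕ)),
          if_pos (by rw [Finset.mem_Icc]; omega)]
      · rw [if_neg hP]
        apply Finset.sum_eq_zero
        intro r _
        rw [if_neg]
        rintro ⟨_, h2⟩
        exact hP h2
    rw [Finset.sum_congr rfl key, Finset.sum_boole]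
    have hVq : V r0 a0 = m0 q := by
      simp only [hV]
      rw [hcast]
    have hcard := hB3 r0 a0 hr01 hr0d
    rw [hVq] at hcard
    exact_mod_cast hcard
  · have key : ∀ s ∈ Finset.Icc 1 k, dE (ii s) q = 0 := by
      intro s hs
      rw [Finset.mem_Icc] at hs
      rw [hdE]
      beta_reduce
      rw [Finsupp.finset_sum_apply]
      apply Finset.sum_eq_zero
      intro r hr
      rw [Finset.mem_Icc] at hr
      have hbnd := hB1 r s hr.1 hr.2 hs.1 hs.2
      have hjr := hjlow r hr.1 hr.2
      have hjn := hjle r hr.1 hr.2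
      have hiir : T (r-1) + 1 ≤ ii s r ∧ ii s r ≤ j r := by
        simp only [hii]
        simp only [hbb] at hbnd
        constructor <;> omega
      have hval : ((ii s r - 1 : ℕ) : Fin n).val = ii s r - 1 :=
        Fin.val_cast_of_lt (by omega)
      rw [Finsupp.single_apply, if_neg]
      intro heq
      have hvq : ii s r - 1 = (q:ℕ) := by rw [← hval, heq]
      exact hq ⟨r, hr.1, hr.2, by omega, by omega⟩
    rw [Finset.sum_congr rfl key]
    simp
end

section
/- Let Gamma be the linear relation graph of I = B_t(u) and fix i in {1,...,d}. If |B_i| >= 2 (equivalently, j_i > t_1 + ... + t_{i-1} + 1), then the induced subgraph of Gamma on B_i is complete: for all h_1, h_2 in B_i with h_1 ≠ h_2, the pair {h_1, h_2} is an edge of Gamma, where B_i = [t_1 + ... + t_{i-1} + 1, j_i]. -/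
open Finset MvPolynomial

/-- Auxiliary index function: minimal possible indices below position `r`, the value `h`
at position `r`, and the maximal indices `j s` above position `r`. -/
def crIdx (t j : ℕ → ℕ) (r h : ℕ) : ℕ → ℕ :=
  fun s => if s < r then 1 + ∑ k ∈ Finset.Icc 1 (s - 1), t k else if s = r then h else j s

lemma crSum (t : ℕ → ℕ) (s : ℕ) (hs : 1 ≤ s) :
    (∑ k ∈ Finset.Icc 1 s, t k) = (∑ k ∈ Finset.Icc 1 (s - 1), t k) + t s := by
  obtain ⟨m, rfl⟩ := Nat.exists_eq_succ_of_ne_zero (by omega : s ≠ 0)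
  rw [Nat.succ_sub_one, Finset.sum_Icc_succ_top (by omega : 1 ≤ m + 1)]

lemma crA (d : ℕ) (t j : ℕ → ℕ) (hj1 : 1 ≤ j 1)
    (hspread : ∀ k, 1 ≤ k → k ≤ d - 1 → j k + t k ≤ j (k + 1)) :
    ∀ s, 1 ≤ s → s ≤ d → 1 + ∑ k ∈ Finset.Icc 1 (s - 1), t k ≤ j s := by
  intro s
  induction s with
  | zero => omega
  | succ m ih =>
    intro _ hsd
    rcases Nat.eq_zero_or_pos m with hm | hm
    · subst hm; simpa using hj1
    · have h1 := ih hm (by omega)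
      have h2 := hspread m hm (by omega)
      rw [Nat.succ_sub_one, crSum t m hm]
      omega

lemma crIdx_mem (d : ℕ) (t j : ℕ → ℕ) (hj1 : 1 ≤ j 1)
    (hjmono : ∀ p q, 1 ≤ p → p < q → q ≤ d → j p < j q)
    (hspread : ∀ k, 1 ≤ k → k ≤ d - 1 → j k + t k ≤ j (k + 1))
    (r : ℕ) (hr1 : 1 ≤ r) (hrd : r ≤ d) (h : ℕ)
    (hh1 : (∑ s ∈ Finset.Icc 1 (r - 1), t s) + 1 ≤ h) (hh2 : h ≤ j r) :
    crIdx t j r h ∈ spreadIdx d t j := by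
  constructor
  · intro s hs1 hsd
    have hA := crA d t j hj1 hspread s hs1 hsd
    have hjs : 1 ≤ j s := by
      rcases Nat.eq_or_lt_of_le hs1 with h1 | h1
      · omega
      · exact le_of_lt (lt_of_le_of_lt hj1 (hjmono 1 s le_rfl h1 hsd))
    simp only [crIdx]
    split_ifs with h1 h2
    · omega
    · subst h2; omega
    · omega
  · intro s hs1 hs1d
    have e3 := hspread s hs1 (by omega)
    by_cases hsr : s = r
    · subst hsr
      simp only [crIdx]
      split_ifs <;> omega
    have e1 : (∑ k ∈ Finset.Icc 1 (s + 1 - 1), t k)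
        = (∑ k ∈ Finset.Icc 1 (s - 1), t k) + t s := by
      rw [Nat.add_sub_cancel, crSum t s hs1]
    have e2 : s + 1 = r → (∑ k ∈ Finset.Icc 1 (r - 1), t k)
        = (∑ k ∈ Finset.Icc 1 (s - 1), t k) + t s := by
      intro hc
      have : r - 1 = s := by omega
      rw [this, crSum t s hs1]
    simp only [crIdx]
    split_ifs with h1 h2 h3 h4 h5 h6 h7 h8 <;>
      first
        | omega
        | (exact absurd (e2 (by omega)) (by omega))
        | (have := e2 (by omega); omega)

lemma crIdx_mon (K : Type*) [Field K] (n d : ℕ) [NeZero n] (t j : ℕ → ℕ)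
    (r : ℕ) (hr1 : 1 ≤ r) (hrd : r ≤ d) (h : ℕ) :
    monOf K n d (crIdx t j r h)
      = xv K n h * ∏ s ∈ (Finset.Icc 1 d).erase r, xv K n (crIdx t j r 0 s) := by
  have hrmem : r ∈ Finset.Icc 1 d := Finset.mem_Icc.mpr ⟨hr1, hrd⟩
  rw [monOf, ← Finset.mul_prod_erase _ _ hrmem]
  congr 1
  · simp [crIdx]
  · refine Finset.prod_congr rfl fun s hs => ?_
    have hsr : s ≠ r := Finset.ne_of_mem_erase hs
    by_cases h1 : s < r
    · simp [crIdx, h1]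
    · simp [crIdx, h1, hsr]

/-- If `|B_r| ≥ 2`, i.e. `j r > t 1 + ⋯ + t (r-1) + 1`, then the induced subgraph of the
linear relation graph `Γ` of `B_t(u)` on `B_r = [t 1 + ⋯ + t (r-1) + 1, j r]` is
complete. -/
theorem stmt14 (K : Type*) [Field K] (n d : ℕ) [NeZero n] (t j : ℕ → ℕ)
    (hd : 2 ≤ d) (ht : ∀ k, 1 ≤ k → k ≤ d - 1 → 1 ≤ t k)
    (hj1 : 1 ≤ j 1) (hjmono : ∀ p q, 1 ≤ p → p < q → q ≤ d → j p < j q)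
    (hjd : j d = n) (hspread : ∀ k, 1 ≤ k → k ≤ d - 1 → j k + t k ≤ j (k + 1))
    (r : ℕ) (hr1 : 1 ≤ r) (hrd : r ≤ d)
    (hcard : 2 ≤ (Finset.Icc ((∑ s ∈ Finset.Icc 1 (r - 1), t s) + 1) (j r)).card) :
    ∀ h₁ ∈ Finset.Icc ((∑ s ∈ Finset.Icc 1 (r - 1), t s) + 1) (j r),
      ∀ h₂ ∈ Finset.Icc ((∑ s ∈ Finset.Icc 1 (r - 1), t s) + 1) (j r),
        h₁ ≠ h₂ → lrEdge K n d (spreadIdx d t j) h₁ h₂ := by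
  intro h₁ hh₁ h₂ hh₂ hne
  simp only [Finset.mem_Icc] at hh₁ hh₂
  have hjrn : j r ≤ n := by
    rcases Nat.eq_or_lt_of_le hrd with rfl | h1
    · omega
    · have := hjmono r d hr1 h1 le_rfl; omega
  refine ⟨by omega, by omega, by omega, by omega, hne,
    crIdx t j r h₂, crIdx_mem d t j hj1 hjmono hspread r hr1 hrd h₂ hh₂.1 hh₂.2,
    crIdx t j r h₁, crIdx_mem d t j hj1 hjmono hspread r hr1 hrd h₁ hh₁.1 hh₁.2, ?_⟩
  rw [crIdx_mon K n d t j r hr1 hrd h₂, crIdx_mon K n d t j r hr1 hrd h₁]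
  ring
end
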